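/- arXiv:2205.15984 — 5 statements merged into one kernel-verified Lean document; each statement's English description precedes it below -/
import Mathlib

section
/- Let (M₁,d₁) and (M₂,d₂) be complete metric spaces, let q : M₁ → M₂ be a quasi-isometry, let (K,d) be a complete metric space, and for each ε > 0 let F_ε : M₂ → K be a continuous map such that lim_{ε→0}(M₂, ε·d₂, F_ε) = (K,d). Then the maps F_ε ∘ q : M₁ → K satisfy conditions (1) and (2) of the limit definition for the rescaled spaces (M₁, ε·d₁); that is, lim_{ε→0}(M₁, ε·d₁, F_ε ∘ q) = (K,d). -/
open Filter Set

/-- A map `q : M₁ → M₂` between metric spaces is a *quasi-isometry* if there exist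
constants `A > 1`, `B > 0`, `C > 0` such that
`A⁻¹ · d₁(x,y) − B ≤ d₂(q x, q y) ≤ A · d₁(x,y) + B` for all `x, y`,
and every `z ∈ M₂` is at distance at most `C` from a point in the image of `q`. -/
def IsQuasiIsometry {M₁ M₂ : Type*} [MetricSpace M₁] [MetricSpace M₂] (q : M₁ → M₂) : Prop :=
  ∃ A B C : ℝ, 1 < A ∧ 0 < B ∧ 0 < C ∧
    (∀ x y : M₁,
      A⁻¹ * dist x y - B ≤ dist (q x) (q y) ∧ dist (q x) (q y) ≤ A * dist x y + B) ∧
    (∀ z : M₂, ∃ x : M₁, dist z (q x) ≤ C)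

/-- `lim_{ε→0} (N, ε·d_N, F_ε) = (K, d)`:
(1) there exist `B' > 0` and constants `A_ε > 0` with `A_ε → 0` as `ε → 0⁺` such that
`B'⁻¹·(ε·d_N(x,y)) − A_ε ≤ d(F_ε x, F_ε y) ≤ B'·(ε·d_N(x,y)) + A_ε` for all `x, y`;
(2) every `w ∈ K` is the limit as `ε → 0⁺` of points `F_ε (x_ε)`. -/
def ScaledLimit {N K : Type*} [MetricSpace N] [MetricSpace K] (F : ℝ → N → K) : Prop :=
  (∃ B' : ℝ, 0 < B' ∧ ∃ A : ℝ → ℝ, (∀ ε > (0 : ℝ), 0 < A ε) ∧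
    Tendsto A (nhdsWithin 0 (Ioi 0)) (nhds 0) ∧
    ∀ ε > (0 : ℝ), ∀ x y : N,
      B'⁻¹ * (ε * dist x y) - A ε ≤ dist (F ε x) (F ε y) ∧
        dist (F ε x) (F ε y) ≤ B' * (ε * dist x y) + A ε) ∧
  (∀ w : K, ∃ x : ℝ → N,
    Tendsto (fun ε => F ε (x ε)) (nhdsWithin 0 (Ioi 0)) (nhds w))

/-- If `q : M₁ → M₂` is a quasi-isometry and `lim_{ε→0}(M₂, ε·d₂, F_ε) = (K,d)`, then
`lim_{ε→0}(M₁, ε·d₁, F_ε ∘ q) = (K,d)`. -/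
theorem scaledLimit_of_quasiIsometry {M₁ M₂ K : Type*}
    [MetricSpace M₁] [CompleteSpace M₁] [MetricSpace M₂] [CompleteSpace M₂]
    [MetricSpace K] [CompleteSpace K]
    (q : M₁ → M₂) (hq : IsQuasiIsometry q)
    (F : ℝ → M₂ → K) (hFcont : ∀ ε > (0 : ℝ), Continuous (F ε))
    (hlim : ScaledLimit F) :
    ScaledLimit (fun ε => F ε ∘ q) := by
  obtain ⟨A, B, C, hA, hB, hC, hqi, hsurj⟩ := hq
  obtain ⟨⟨B', hB', Aε, hAεpos, hAεtend, hineq⟩, happrox⟩ := hlim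
  have hA0 : (0:ℝ) < A := lt_trans one_pos hA
  have hB'inv : (0:ℝ) < B'⁻¹ := inv_pos.mpr hB'
  constructor
  · refine ⟨B' * A, by positivity, fun ε => Aε ε + (B' + B'⁻¹) * B * ε, ?_, ?_, ?_⟩
    · intro ε hε
      have := hAεpos ε hε
      positivity
    · have h1 : Tendsto (fun ε : ℝ => (B' + B'⁻¹) * B * ε)
          (nhdsWithin 0 (Ioi 0)) (nhds 0) := by
        have hcont : Continuous (fun ε : ℝ => (B' + B'⁻¹) * B * ε) := by continuity
        have := hcont.tendsto 0
        simp only [mul_zero] at this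
        exact this.mono_left nhdsWithin_le_nhds
      simpa using hAεtend.add h1
    · intro ε hε x y
      obtain ⟨hlo, hhi⟩ := hineq ε hε (q x) (q y)
      obtain ⟨hqlo, hqhi⟩ := hqi x y
      constructor
      · have h1 : B'⁻¹ * (ε * (A⁻¹ * dist x y - B)) - Aε ε ≤ dist (F ε (q x)) (F ε (q y)) := by
          refine le_trans ?_ hlo
          have : ε * (A⁻¹ * dist x y - B) ≤ ε * dist (q x) (q y) :=
            mul_le_mul_of_nonneg_left hqlo hε.le
          nlinarith
        have hABinv : (B' * A)⁻¹ = B'⁻¹ * A⁻¹ := by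
          rw [mul_inv]
        calc (B' * A)⁻¹ * (ε * dist x y) - (Aε ε + (B' + B'⁻¹) * B * ε)
            ≤ B'⁻¹ * (ε * (A⁻¹ * dist x y - B)) - Aε ε := by
              rw [hABinv]
              have hexp : B'⁻¹ * (ε * (A⁻¹ * dist x y - B))
                  = B'⁻¹ * A⁻¹ * (ε * dist x y) - B'⁻¹ * B * ε := by ring
              have hpos : 0 ≤ B' * B * ε := by positivity
              rw [hexp]; linarith
          _ ≤ _ := h1
      · have h1 : dist (F ε (q x)) (F ε (q y)) ≤ B' * (ε * (A * dist x y + B)) + Aε ε := by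
          refine le_trans hhi ?_
          have : ε * dist (q x) (q y) ≤ ε * (A * dist x y + B) :=
            mul_le_mul_of_nonneg_left hqhi hε.le
          nlinarith
        refine h1.trans ?_
        have hexp : B' * (ε * (A * dist x y + B))
            = B' * A * (ε * dist x y) + B' * B * ε := by ring
        have hpos : 0 ≤ B'⁻¹ * B * ε := by positivity
        rw [hexp]; simp only []; linarith
  · intro w
    obtain ⟨x, hx⟩ := happrox w
    have hsel : ∀ ε : ℝ, ∃ x₁ : M₁, dist (x ε) (q x₁) ≤ C := fun ε => hsurj (x ε)
    choose x₁ hx₁ using hsel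
    refine ⟨x₁, ?_⟩
    rw [tendsto_iff_dist_tendsto_zero]
    have hbound : ∀ᶠ ε in nhdsWithin (0:ℝ) (Ioi 0),
        dist (F ε (q (x₁ ε))) w ≤ (B' * (ε * C) + Aε ε) + dist (F ε (x ε)) w := by
      filter_upwards [self_mem_nhdsWithin] with ε (hε : ε ∈ Ioi (0:ℝ))
      have h1 : dist (F ε (q (x₁ ε))) (F ε (x ε)) ≤ B' * (ε * C) + Aε ε := by
        have h2 := (hineq ε hε (q (x₁ ε)) (x ε)).2
        have h3 : ε * dist (q (x₁ ε)) (x ε) ≤ ε * C := by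
          rw [dist_comm]
          exact mul_le_mul_of_nonneg_left (hx₁ ε) (le_of_lt hε)
        nlinarith
      calc dist (F ε (q (x₁ ε))) w
          ≤ dist (F ε (q (x₁ ε))) (F ε (x ε)) + dist (F ε (x ε)) w := dist_triangle _ _ _
        _ ≤ (B' * (ε * C) + Aε ε) + dist (F ε (x ε)) w := by linarith
    have htend : Tendsto (fun ε => (B' * (ε * C) + Aε ε) + dist (F ε (x ε)) w)
        (nhdsWithin (0:ℝ) (Ioi 0)) (nhds 0) := by
      have hd : Tendsto (fun ε => dist (F ε (x ε)) w) (nhdsWithin (0:ℝ) (Ioi 0)) (nhds 0) :=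
        tendsto_iff_dist_tendsto_zero.mp hx
      have hlin : Tendsto (fun ε : ℝ => B' * (ε * C)) (nhdsWithin (0:ℝ) (Ioi 0)) (nhds 0) := by
        have hcont : Continuous (fun ε : ℝ => B' * (ε * C)) := by continuity
        have := hcont.tendsto 0
        simp only [zero_mul, mul_zero] at this
        exact this.mono_left nhdsWithin_le_nhds
      simpa using (hlin.add hAεtend).add hd
    exact squeeze_zero' (Eventually.of_forall fun ε => dist_nonneg) hbound htend
end

section
/- Let (M_n,d_n), n ∈ ℕ, and (M,d) be complete metric spaces with (M,d) separable, let F_n : M_n → M be continuous maps with lim_n(M_n,d_n,F_n) = (M,d), and let f_n : M_n → ℝ be an equicontinuous family of functions which is bounded on compact sets. Then there exist a subsequence n(k) and a continuous function f : M → ℝ such that f_{n(k)} converges to f uniformly on compact sets. -/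
open Filter Set

/-- Arzelà–Ascoli for a converging sequence of metric spaces: given complete metric
spaces `(Mₙ, dₙ)` with `limₙ (Mₙ, dₙ, Fₙ) = (M, d)`, `M` separable, and an
equicontinuous family `fₙ : Mₙ → ℝ` which is bounded on compact sets, some
subsequence `f_{n(k)}` converges uniformly on compact sets to a continuous
function on `M`. -/
theorem exists_subseq_tendsto_uniformly_on_compacts
    {M : Type*} [MetricSpace M] [CompleteSpace M] [TopologicalSpace.SeparableSpace M]
    (Mn : ℕ → Type*) [∀ n, MetricSpace (Mn n)] [∀ n, CompleteSpace (Mn n)]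
    (F : ∀ n, Mn n → M) (hFcont : ∀ n, Continuous (F n))
    -- condition (1) of `limₙ (Mₙ, dₙ, Fₙ) = (M, d)`
    (B : ℝ) (hB : 0 < B) (A : ℕ → ℝ) (hA : ∀ n, 0 < A n)
    (hA0 : Tendsto A atTop (nhds 0))
    (h1 : ∀ n, ∀ x y : Mn n,
      B⁻¹ * dist x y - A n ≤ dist (F n x) (F n y) ∧
        dist (F n x) (F n y) ≤ B * dist x y + A n)
    -- condition (2) of `limₙ (Mₙ, dₙ, Fₙ) = (M, d)`
    (h2 : ∀ y : M, ∃ x : ∀ n, Mn n, Tendsto (fun n => F n (x n)) atTop (nhds y))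
    (f : ∀ n, Mn n → ℝ)
    -- equicontinuity
    (hequi : ∀ ε > (0 : ℝ), ∃ δ > (0 : ℝ), ∀ n, ∀ x y : Mn n,
      dist x y < δ → |f n x - f n y| < ε)
    -- boundedness on compact sets
    (hbdd : ∀ K : Set M, IsCompact K → ∃ C : ℝ, ∀ n, ∀ x : Mn n, F n x ∈ K → |f n x| ≤ C) :
    ∃ φ : ℕ → ℕ, StrictMono φ ∧ ∃ g : M → ℝ, Continuous g ∧
      -- `f_{φ k} → g` uniformly on compact sets
      ∀ K : Set M, IsCompact K → ∀ ε > (0 : ℝ), ∃ N : ℕ, ∀ k ≥ N, ∀ x : Mn (φ k),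
        F (φ k) x ∈ K → |f (φ k) x - g (F (φ k) x)| < ε := by
  rcases isEmpty_or_nonempty M with hM | hM
  · exact ⟨id, strictMono_id, fun _ => 0, continuous_const,
      fun K _ ε _ => ⟨0, fun k _ x _ => (hM.false (F k x)).elim⟩⟩
  -- Key estimate: for large `n`, closeness of images under `F n` controls `|f n · - f n ·|`.
  have key : ∀ ε > (0 : ℝ), ∃ η > (0 : ℝ), ∃ N : ℕ, ∀ n ≥ N, ∀ a b : Mn n,
      dist (F n a) (F n b) < η → |f n a - f n b| < ε := by
    intro ε hε
    obtain ⟨δ, hδ, hδ'⟩ := hequi ε hε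
    refine ⟨δ / (2 * B), by positivity, ?_⟩
    obtain ⟨N, hN⟩ := eventually_atTop.1
      (hA0.eventually (gt_mem_nhds (show (0 : ℝ) < δ / (2 * B) by positivity)))
    refine ⟨N, fun n hn a b hab => ?_⟩
    have h := (h1 n a b).1
    have hAn := hN n hn
    have hBB : B * B⁻¹ = 1 := mul_inv_cancel₀ hB.ne'
    have hd : dist a b < δ := by
      have hinv : (0 : ℝ) < B⁻¹ := inv_pos.2 hB
      have hsum : δ / (2 * B) + δ / (2 * B) = B⁻¹ * δ := by field_simp; ring
      have h' : B⁻¹ * dist a b < B⁻¹ * δ := by linarith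
      exact (mul_lt_mul_iff_right₀ hinv).1 h'
    exact hδ' n a b hd
  -- dense sequence and approximating points
  set u : ℕ → M := TopologicalSpace.denseSeq M with hu_def
  have hu : DenseRange u := TopologicalSpace.denseRange_denseSeq M
  choose x hx using fun i => h2 (u i)
  -- uniform bounds along each approximating sequence
  have hCex : ∀ i : ℕ, ∃ C : ℝ, ∀ n, |f n (x i n)| ≤ C := by
    intro i
    obtain ⟨C, hC⟩ := hbdd _ (hx i).isCompact_insert_range
    exact ⟨C, fun n => hC n _ (mem_insert_of_mem _ (mem_range_self n))⟩
  choose C hC using hCex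
  -- extract a pointwise convergent subsequence via compactness of a product of intervals
  set S : ℕ → (ℕ → ℝ) := fun n i => f n (x i n) with hS
  have hSmem : ∀ n, S n ∈ Set.pi univ (fun i => Icc (-(C i)) (C i)) :=
    fun n i _ => abs_le.1 (hC i n)
  obtain ⟨L, -, φ, hφ, hLconv⟩ :=
    (isCompact_univ_pi (fun i => isCompact_Icc)).tendsto_subseq hSmem
  have hLi : ∀ i, Tendsto (fun k => f (φ k) (x i (φ k))) atTop (nhds (L i)) :=
    fun i => tendsto_pi_nhds.1 hLconv i
  refine ⟨φ, hφ, ?_⟩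
  -- uniform-continuity-type estimate for `L`
  have hLest : ∀ ε > (0 : ℝ), ∃ η > (0 : ℝ), ∀ i j, dist (u i) (u j) < η →
      |L i - L j| ≤ ε := by
    intro ε hε
    obtain ⟨η, hη, N, hN⟩ := key ε hε
    refine ⟨η / 3, by positivity, fun i j hij => ?_⟩
    have htend : Tendsto (fun k => |f (φ k) (x i (φ k)) - f (φ k) (x j (φ k))|)
        atTop (nhds |L i - L j|) := ((hLi i).sub (hLi j)).abs
    refine le_of_tendsto htend ?_
    have hti : Tendsto (fun k => F (φ k) (x i (φ k))) atTop (nhds (u i)) :=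
      (hx i).comp hφ.tendsto_atTop
    have htj : Tendsto (fun k => F (φ k) (x j (φ k))) atTop (nhds (u j)) :=
      (hx j).comp hφ.tendsto_atTop
    obtain ⟨N₁, hN₁⟩ := Metric.tendsto_atTop.1 hti (η / 3) (by positivity)
    obtain ⟨N₂, hN₂⟩ := Metric.tendsto_atTop.1 htj (η / 3) (by positivity)
    obtain ⟨N₃, hN₃⟩ := eventually_atTop.1 (hφ.tendsto_atTop.eventually_ge_atTop N)
    filter_upwards [eventually_ge_atTop N₁, eventually_ge_atTop N₂, eventually_ge_atTop N₃]
      with k hk₁ hk₂ hk₃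
    have hdist : dist (F (φ k) (x i (φ k))) (F (φ k) (x j (φ k))) < η := by
      have h4 := dist_triangle4 (F (φ k) (x i (φ k))) (u i) (u j) (F (φ k) (x j (φ k)))
      have e1 := hN₁ k hk₁
      have e2 := hN₂ k hk₂
      have e2' : dist (u j) (F (φ k) (x j (φ k))) < η / 3 := by rwa [dist_comm] at e2
      linarith
    exact (hN (φ k) (hN₃ k hk₃) _ _ hdist).le
  have Lwd : ∀ i j, u i = u j → L i = L j := by
    intro i j hij
    by_contra hne
    have hpos : 0 < |L i - L j| := abs_pos.2 (sub_ne_zero.2 hne)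
    obtain ⟨η, hη, hest⟩ := hLest (|L i - L j| / 2) (by linarith)
    have := hest i j (by simp [hij, hη])
    linarith
  -- define `g` on the dense set and extend
  set D : Set M := Set.range u with hD_def
  have hD : Dense D := hu
  have hval : DenseRange (Subtype.val : D → M) := hD.denseRange_val
  have hui : IsUniformInducing (Subtype.val : D → M) :=
    isUniformEmbedding_subtype_val.isUniformInducing
  set h : D → ℝ := fun d => L (Classical.choose d.2) with hh_def
  have hh : ∀ d : D, u (Classical.choose d.2) = (d : M) := fun d => Classical.choose_spec d.2
  have hhu : UniformContinuous h := by
    rw [Metric.uniformContinuous_iff]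
    intro ε hε
    obtain ⟨η, hη, hest⟩ := hLest (ε / 2) (by linarith)
    refine ⟨η, hη, fun {a b} hab => ?_⟩
    have hdab : dist (u (Classical.choose a.2)) (u (Classical.choose b.2)) < η := by
      rw [hh a, hh b]; rwa [Subtype.dist_eq] at hab
    have := hest _ _ hdab
    rw [Real.dist_eq]
    calc |h a - h b| ≤ ε / 2 := this
      _ < ε := by linarith
  set di := hui.isDenseInducing hval with hdi_def
  set g : M → ℝ := di.extend h with hg_def
  have hgu : UniformContinuous g := uniformContinuous_uniformly_extend hui hval hhu
  have hge : ∀ i, g (u i) = L i := by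
    intro i
    have h1' : g ((⟨u i, mem_range_self i⟩ : D) : M) = h ⟨u i, mem_range_self i⟩ :=
      di.extend_eq hhu.continuous _
    rw [show u i = ((⟨u i, mem_range_self i⟩ : D) : M) from rfl, h1']
    exact Lwd _ i (hh ⟨u i, mem_range_self i⟩)
  refine ⟨g, hgu.continuous, ?_⟩
  -- uniform convergence on compact sets
  intro K hK ε hε
  obtain ⟨η₁, hη₁, N₀, hN₀⟩ := key (ε / 4) (by linarith)
  obtain ⟨η₂, hη₂, hgmod⟩ := Metric.uniformContinuous_iff.1 hgu (ε / 4) (by linarith)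
  set θ := min η₁ η₂ with hθ_def
  have hθpos : 0 < θ := lt_min hη₁ hη₂
  have hcover : K ⊆ ⋃ i : ℕ, Metric.ball (u i) (θ / 3) := by
    intro y _
    obtain ⟨i, hi⟩ := hu.exists_dist_lt y (show (0 : ℝ) < θ / 3 by positivity)
    exact mem_iUnion.2 ⟨i, Metric.mem_ball.2 hi⟩
  obtain ⟨I, hI⟩ := hK.elim_finite_subcover (fun i => Metric.ball (u i) (θ / 3))
    (fun i => Metric.isOpen_ball) hcover
  have hev : ∀ᶠ k in atTop, (∀ i ∈ I, |f (φ k) (x i (φ k)) - L i| < ε / 4 ∧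
      dist (F (φ k) (x i (φ k))) (u i) < θ / 3) ∧ φ k ≥ N₀ := by
    refine ((eventually_all_finset I).2 fun i _ => ?_).and
      (hφ.tendsto_atTop.eventually_ge_atTop N₀)
    have h1' : ∀ᶠ k in atTop, |f (φ k) (x i (φ k)) - L i| < ε / 4 := by
      have := Metric.tendsto_atTop.1 (hLi i) (ε / 4) (by linarith)
      obtain ⟨N', hN'⟩ := this
      filter_upwards [eventually_ge_atTop N'] with k hk
      simpa [Real.dist_eq] using hN' k hk
    have h2' : ∀ᶠ k in atTop, dist (F (φ k) (x i (φ k))) (u i) < θ / 3 := by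
      obtain ⟨N', hN'⟩ := Metric.tendsto_atTop.1 ((hx i).comp hφ.tendsto_atTop) (θ / 3)
        (by positivity)
      filter_upwards [eventually_ge_atTop N'] with k hk using hN' k hk
    exact h1'.and h2'
  obtain ⟨N, hN⟩ := eventually_atTop.1 hev
  refine ⟨N, fun k hk x₀ hx₀ => ?_⟩
  obtain ⟨hNa, hNb⟩ := hN k hk
  obtain ⟨i, hiI, hx₀i⟩ := mem_iUnion₂.1 (hI hx₀)
  have hdx : dist (F (φ k) x₀) (u i) < θ / 3 := Metric.mem_ball.1 hx₀i
  obtain ⟨hfi, hFi⟩ := hNa i hiI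
  -- three-epsilon argument
  have hd1 : dist (F (φ k) x₀) (F (φ k) (x i (φ k))) < η₁ := by
    have := dist_triangle (F (φ k) x₀) (u i) (F (φ k) (x i (φ k)))
    have h' : dist (u i) (F (φ k) (x i (φ k))) < θ / 3 := by rwa [dist_comm] at hFi
    have hθ1 : θ ≤ η₁ := min_le_left _ _
    linarith
  have e1 : |f (φ k) x₀ - f (φ k) (x i (φ k))| < ε / 4 := hN₀ (φ k) hNb _ _ hd1
  have e3 : |L i - g (F (φ k) x₀)| < ε / 4 := by
    have hd2 : dist (u i) (F (φ k) x₀) < η₂ := by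
      rw [dist_comm]
      have hθ2 : θ ≤ η₂ := min_le_right _ _
      linarith
    have := hgmod hd2
    rwa [Real.dist_eq, hge i] at this
  have t1 := abs_sub_le (f (φ k) x₀) (f (φ k) (x i (φ k))) (L i)
  have t2 := abs_sub_le (f (φ k) x₀) (L i) (g (F (φ k) x₀))
  linarith
end

section
/- Let (M_n,d_n), n ∈ ℕ, and (M,d) be complete metric spaces with (M,d) separable, let F_n : M_n → M be continuous maps with lim_n(M_n,d_n,F_n) = (M,d), where B > 0 is the constant in condition (1). Let f_n : M_n → ℝ be functions satisfying |f_n(x) − f_n(y)| ≤ Q·d_n(x,y) for all n and all x,y ∈ M_n (equi-Lipschitz with constant Q), and let f : M → ℝ be a continuous function such that f_n → f uniformly on compact sets. Then f is Lipschitz; in fact |f(x) − f(y)| ≤ Q·B·d(x,y) for all x,y ∈ M. -/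
open Filter Set

/-- If `limₙ (Mₙ, dₙ, Fₙ) = (M, d)` (with constant `B` in condition (1)),
the functions `fₙ : Mₙ → ℝ` are equi-Lipschitz with constant `Q`, and
`fₙ → f` uniformly on compact sets with `f` continuous, then `f` is Lipschitz:
`|f x − f y| ≤ Q·B·d(x,y)` for all `x, y ∈ M`. -/
theorem lipschitz_of_limit_equiLipschitz
    {M : Type*} [MetricSpace M] [CompleteSpace M] [TopologicalSpace.SeparableSpace M]
    (Mn : ℕ → Type*) [∀ n, MetricSpace (Mn n)] [∀ n, CompleteSpace (Mn n)]
    (F : ∀ n, Mn n → M) (hFcont : ∀ n, Continuous (F n))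
    -- condition (1) of `limₙ (Mₙ, dₙ, Fₙ) = (M, d)`
    (B : ℝ) (hB : 0 < B) (A : ℕ → ℝ) (hA : ∀ n, 0 < A n)
    (hA0 : Tendsto A atTop (nhds 0))
    (h1 : ∀ n, ∀ x y : Mn n,
      B⁻¹ * dist x y - A n ≤ dist (F n x) (F n y) ∧
        dist (F n x) (F n y) ≤ B * dist x y + A n)
    -- condition (2) of `limₙ (Mₙ, dₙ, Fₙ) = (M, d)`
    (h2 : ∀ y : M, ∃ x : ∀ n, Mn n, Tendsto (fun n => F n (x n)) atTop (nhds y))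
    (f : ∀ n, Mn n → ℝ) (Q : ℝ)
    -- equi-Lipschitz with constant `Q`
    (hlip : ∀ n, ∀ x y : Mn n, |f n x - f n y| ≤ Q * dist x y)
    (g : M → ℝ) (hg : Continuous g)
    -- `fₙ → g` uniformly on compact sets
    (hconv : ∀ K : Set M, IsCompact K → ∀ ε > (0 : ℝ), ∃ N : ℕ, ∀ n ≥ N, ∀ x : Mn n,
      F n x ∈ K → |f n x - g (F n x)| < ε) :
    ∀ x y : M, |g x - g y| ≤ Q * B * dist x y := by
  intro x y
  by_cases hxy : x = y
  · subst hxy; simp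
  obtain ⟨xs, hxs⟩ := h2 x
  obtain ⟨ys, hys⟩ := h2 y
  have hdist : Tendsto (fun n => dist (F n (xs n)) (F n (ys n))) atTop (nhds (dist x y)) :=
    hxs.dist hys
  have hd0 : (0:ℝ) < dist x y := dist_pos.2 hxy
  -- Q is nonnegative
  have hQ : 0 ≤ Q := by
    have h3 : ∀ᶠ n in atTop, dist x y / 2 < dist (F n (xs n)) (F n (ys n)) :=
      hdist.eventually (eventually_gt_nhds (by linarith))
    have h4 : ∀ᶠ n in atTop, A n < dist x y / 4 :=
      hA0.eventually (eventually_lt_nhds (by linarith))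
    obtain ⟨n, hn3, hn4⟩ := (h3.and h4).exists
    have hdn : 0 < dist (xs n) (ys n) := by
      have := (h1 n (xs n) (ys n)).2
      nlinarith
    have := hlip n (xs n) (ys n)
    have habs : (0:ℝ) ≤ |f n (xs n) - f n (ys n)| := abs_nonneg _
    nlinarith
  apply le_of_forall_pos_le_add
  intro ε hε
  set K : Set M := insert x (range fun n => F n (xs n)) ∪
      insert y (range fun n => F n (ys n)) with hK
  have hKc : IsCompact K := (hxs.isCompact_insert_range).union (hys.isCompact_insert_range)
  obtain ⟨N, hN⟩ := hconv K hKc (ε/4) (by linarith)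
  have hbound : ∀ᶠ n in atTop,
      |g (F n (xs n)) - g (F n (ys n))| ≤
        ε/2 + Q * B * (dist (F n (xs n)) (F n (ys n)) + A n) := by
    filter_upwards [eventually_ge_atTop N] with n hn
    have hx' := hN n hn (xs n) (by left; right; exact ⟨n, rfl⟩)
    have hy' := hN n hn (ys n) (by right; right; exact ⟨n, rfl⟩)
    have hl := hlip n (xs n) (ys n)
    have hdn : dist (xs n) (ys n) ≤ B * (dist (F n (xs n)) (F n (ys n)) + A n) := by
      have := (h1 n (xs n) (ys n)).1
      nlinarith [mul_le_mul_of_nonneg_left this hB.le, mul_inv_cancel₀ hB.ne',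
        dist_nonneg (x := xs n) (y := ys n)]
    have hQd : Q * dist (xs n) (ys n) ≤ Q * (B * (dist (F n (xs n)) (F n (ys n)) + A n)) :=
      mul_le_mul_of_nonneg_left hdn hQ
    calc |g (F n (xs n)) - g (F n (ys n))|
        ≤ |g (F n (xs n)) - f n (xs n)| + |f n (xs n) - f n (ys n)|
            + |f n (ys n) - g (F n (ys n))| := by
          have := abs_sub_le (g (F n (xs n))) (f n (xs n)) (g (F n (ys n)))
          have := abs_sub_le (f n (xs n)) (f n (ys n)) (g (F n (ys n)))
          linarith
      _ ≤ ε/4 + (Q * dist (xs n) (ys n)) + ε/4 := by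
          rw [abs_sub_comm (g (F n (xs n)))]
          linarith
      _ ≤ ε/2 + Q * B * (dist (F n (xs n)) (F n (ys n)) + A n) := by
          rw [mul_assoc]; linarith
  have hlhs : Tendsto (fun n => |g (F n (xs n)) - g (F n (ys n))|) atTop
      (nhds (|g x - g y|)) := ((hg.tendsto x).comp hxs).sub ((hg.tendsto y).comp hys) |>.abs
  have hrhs : Tendsto (fun n => ε/2 + Q * B * (dist (F n (xs n)) (F n (ys n)) + A n)) atTop
      (nhds (ε/2 + Q * B * (dist x y + 0))) :=
    tendsto_const_nhds.add ((hdist.add hA0).const_mul _)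
  have := le_of_tendsto_of_tendsto hlhs hrhs hbound
  rw [add_zero] at this
  linarith
end

section
/- (Uniqueness of Lipschitz viscosity solutions, torus case.) Let H : ℝⁿ × ℝⁿ → ℝ be C², ℤⁿ-periodic in x (H(x+k,p) = H(x,p) for all k ∈ ℤⁿ), convex in p (the Hessian ∂²H/∂p∂p(x,p) is positive definite for all (x,p)), and superlinear in p: H(x,p)/|p| → ∞ as |p| → ∞, uniformly in x. Let f : ℝⁿ → ℝ be Lipschitz. Then there is at most one Lipschitz function u : ℝⁿ × [0,∞) → ℝ which is a viscosity solution of ∂_t u + H(x, ∂_x u) = 0 on ℝⁿ × (0,∞) and satisfies u(x,0) = f(x) for all x ∈ ℝⁿ. -/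
open Set Topology

noncomputable section

/-- `u` is a viscosity subsolution of `∂ₜu + G(x, ∂ₓu) = 0` on `U ⊆ ℝⁿ × ℝ`. -/
def IsViscositySubsolutionOn {n : ℕ}
    (G : EuclideanSpace ℝ (Fin n) → EuclideanSpace ℝ (Fin n) → ℝ)
    (u : EuclideanSpace ℝ (Fin n) × ℝ → ℝ)
    (U : Set (EuclideanSpace ℝ (Fin n) × ℝ)) : Prop :=
  ∀ φ : EuclideanSpace ℝ (Fin n) × ℝ → ℝ, ContDiff ℝ 1 φ →
    ∀ p₀ ∈ U, IsLocalMaxOn (fun p => u p - φ p) U p₀ →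
      deriv (fun t => φ (p₀.1, t)) p₀.2 +
        G p₀.1 (gradient (fun x => φ (x, p₀.2)) p₀.1) ≤ 0

/-- `u` is a viscosity supersolution of `∂ₜu + G(x, ∂ₓu) = 0` on `U ⊆ ℝⁿ × ℝ`. -/
def IsViscositySupersolutionOn {n : ℕ}
    (G : EuclideanSpace ℝ (Fin n) → EuclideanSpace ℝ (Fin n) → ℝ)
    (u : EuclideanSpace ℝ (Fin n) × ℝ → ℝ)
    (U : Set (EuclideanSpace ℝ (Fin n) × ℝ)) : Prop :=
  ∀ φ : EuclideanSpace ℝ (Fin n) × ℝ → ℝ, ContDiff ℝ 1 φ →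
    ∀ p₀ ∈ U, IsLocalMinOn (fun p => u p - φ p) U p₀ →
      0 ≤ deriv (fun t => φ (p₀.1, t)) p₀.2 +
        G p₀.1 (gradient (fun x => φ (x, p₀.2)) p₀.1)

namespace ViscAux

lemma ar_lam (σ t₀ : ℝ) (hσ : 0 < σ) (ht : 0 < t₀) : σ / (8 * (t₀ + 1)) * t₀ ≤ σ / 8 := by
  rw [div_mul_eq_mul_div, div_le_div_iff₀ (by linarith) (by norm_num)]
  nlinarith

lemma ar_th (σ t₀ th : ℝ) (h : th * (8 * (t₀ ^ 2 + 1)) ≤ σ) (hth : 0 ≤ th) : th * t₀ ^ 2 ≤ σ / 8 := by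
  nlinarith [sq_nonneg t₀]

lemma ar_de2 (d a s : ℝ) (hd : 0 ≤ d) (ha : 0 ≤ a) (h : d * (16 * (a ^ 2 + 1)) ≤ s) :
    2 * d * a ^ 2 ≤ s / 8 := by nlinarith [sq_nonneg a]

lemma norm_bd (de K nx : ℝ) (hde : 0 < de) (h : de * nx ^ 2 ≤ K) (hnx : 0 ≤ nx) :
    nx ≤ 1 + K / de := by
  have hKde : nx ^ 2 ≤ K / de := by rw [le_div_iff₀ hde]; nlinarith
  nlinarith [sq_nonneg (nx - 1)]

lemma bounds_lemma (C W de th lam T K σ t s a b ρ2 : ℝ)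
    (hC : 0 ≤ C) (hW : 1 ≤ W) (hde : 0 < de) (hth : 0 < th) (hth1 : th ≤ 1)
    (hT : th * T = 3 * C + 1 + th) (hK : K = 2 * C * T + C ^ 2 + 1)
    (ht : 0 ≤ t) (hs : 0 ≤ s) (ha : 0 ≤ a) (hb : 0 ≤ b) (hρ : 0 ≤ ρ2)
    (hσ : 0 < σ) (hlam : 0 ≤ lam) (hbs : s ≤ t + b)
    (hmain : th * t ^ 2 + W * (a ^ 2 + b ^ 2) + de * ρ2 + lam * t + σ / 2
      ≤ 2 * C * t + C * (a + b)) :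
    t ≤ T ∧ s ≤ T + 1 + 2 * K ∧ W * (a ^ 2 + b ^ 2) ≤ 2 * K ∧ de * ρ2 ≤ K := by
  have hT0 : 1 ≤ T := by
    have h1 : th * 1 ≤ th * T := by linarith
    exact le_of_mul_le_mul_left h1 hth
  have hCab : C * (a + b) ≤ C ^ 2 + (W / 2) * (a ^ 2 + b ^ 2) := by
    have c1 : C * a ≤ (a ^ 2 + C ^ 2) / 2 := by linarith [sq_nonneg (a - C)]
    have c2 : C * b ≤ (b ^ 2 + C ^ 2) / 2 := by linarith [sq_nonneg (b - C)]
    have c3 : (a ^ 2 + b ^ 2) / 2 ≤ (W / 2) * (a ^ 2 + b ^ 2) := by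
      have := mul_nonneg (by linarith : (0:ℝ) ≤ (W - 1) / 2) (by positivity : (0:ℝ) ≤ a ^ 2 + b ^ 2)
      linarith [this]
    linarith
  have h2 : th * t ^ 2 + (W / 2) * (a ^ 2 + b ^ 2) + de * ρ2 ≤ 2 * C * t + C ^ 2 := by
    linarith [mul_nonneg hlam ht]
  have hWab0 : 0 ≤ (W / 2) * (a ^ 2 + b ^ 2) :=
    mul_nonneg (by linarith) (by positivity)
  have hdeρ : 0 ≤ de * ρ2 := mul_nonneg hde.le hρ
  have hth2 : 0 ≤ th * t ^ 2 := mul_nonneg hth.le (sq_nonneg t)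
  have h3 : th * t ^ 2 ≤ 2 * C * t + C ^ 2 := by linarith
  have htT : t ≤ T := by
    by_contra hcon
    push_neg at hcon
    have h4 : th * T ≤ th * t := by
      have := mul_le_mul_of_nonneg_left hcon.le hth.le
      linarith
    have h4' : 3 * C + 1 ≤ th * t := by linarith
    have h5 : (3 * C + 1) * t ≤ th * t * t :=
      mul_le_mul_of_nonneg_right h4' ht
    have h6 : (3 * C + 1) * t ≤ 2 * C * t + C ^ 2 := by
      calc (3 * C + 1) * t ≤ th * t * t := h5
        _ = th * t ^ 2 := by ring
        _ ≤ 2 * C * t + C ^ 2 := h3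
    have h7 : (C + 1) * t ≤ C ^ 2 := by linarith [h6]
    have h8 : 3 * C + 1 ≤ T := by
      have hTnn : (0:ℝ) ≤ T := by linarith
      have h8a := mul_nonneg (by linarith : (0:ℝ) ≤ 1 - th) hTnn
      have h8b : (1 - th) * T = T - th * T := by ring
      linarith
    have h9 : 3 * C + 1 < t := by linarith
    have h10 := mul_lt_mul_of_pos_left h9 (by linarith : (0:ℝ) < C + 1)
    have h11 : (C + 1) * (3 * C + 1) = 3 * C ^ 2 + 4 * C + 1 := by ring
    linarith [sq_nonneg C]
  have hCt : 2 * C * t ≤ 2 * C * T := by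
    have := mul_le_mul_of_nonneg_left htT (by linarith : (0:ℝ) ≤ 2 * C)
    linarith
  have hWab : W * (a ^ 2 + b ^ 2) ≤ 2 * K := by linarith [h2, hCt, hdeρ, hth2]
  have hdeK : de * ρ2 ≤ K := by linarith [h2, hCt, hWab0, hth2]
  have hbK : b ≤ 1 + 2 * K := by
    have hb2 : b ^ 2 ≤ 2 * K := by
      linarith [mul_nonneg (by linarith : (0:ℝ) ≤ W - 1) (sq_nonneg b),
        mul_nonneg (by linarith : (0:ℝ) ≤ W) (sq_nonneg a)]
    linarith [sq_nonneg (b - 1)]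
  exact ⟨htT, by linarith, hWab, hdeK⟩

lemma refined_lemma (W C g a b : ℝ) (hW : 0 < W) (hC : 0 ≤ C) (hg : 0 ≤ g)
    (ha : 0 ≤ a) (hb : 0 ≤ b)
    (h : W * (a ^ 2 + b ^ 2) ≤ C * (a + b) + g * a) : W * a ≤ 2 * (C + g) := by
  have hP : 0 ≤ C + g := by linarith
  have hX : 0 ≤ W * a := mul_nonneg hW.le ha
  have h' : W * (a ^ 2 + b ^ 2) ≤ (C + g) * (a + b) := by
    linarith [mul_nonneg hg hb]
  have h9 : 4 * (W * a) ^ 2 ≤ 4 * ((C + g) * (W * a)) + (C + g) ^ 2 := by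
    linarith [mul_le_mul_of_nonneg_left h' (by linarith : (0:ℝ) ≤ 4 * W),
      sq_nonneg (2 * W * b - (C + g))]
  by_contra hcon
  push_neg at hcon
  have h10 : 2 * (C + g) ^ 2 ≤ (C + g) * (W * a) := by
    have := mul_le_mul_of_nonneg_left hcon.le hP
    linarith [this]
  have h11 : 8 * ((C + g) * (W * a)) ≤ 10 * (C + g) ^ 2 := by
    linarith [h9, sq_nonneg (2 * (W * a) - 3 * (C + g))]
  have h12 : (C + g) ^ 2 ≤ 0 := by linarith
  have h13 : C + g = 0 := by
    have := le_antisymm h12 (sq_nonneg (C + g))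
    exact pow_eq_zero_iff (by norm_num) |>.1 this
  have h14 : 0 < W * a := by rw [h13] at hcon; linarith
  have h15 : 0 < (W * a) ^ 2 := pow_pos h14 2
  rw [h13] at h9
  linarith

lemma sq_diff_bd (de X Y a : ℝ) (hde : 0 ≤ de) (hX : 0 ≤ X) (hY : 0 ≤ Y) (h : |X - Y| ≤ a) :
    de * (X ^ 2 - Y ^ 2) ≤ de * (X + Y) * a := by
  have h2 := abs_le.1 h
  nlinarith [mul_nonneg hde (add_nonneg hX hY)]

lemma g_sq (de X Y K : ℝ) (hde : 0 ≤ de) (h : de * (X ^ 2 + Y ^ 2) ≤ K) :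
    (de * (X + Y)) ^ 2 ≤ 2 * de * K := by nlinarith [sq_nonneg (X - Y), sq_nonneg de, mul_nonneg hde hde]

lemma le_one_of_sq (g : ℝ) (h : g ^ 2 ≤ 1) (hg : 0 ≤ g) : g ≤ 1 := by nlinarith

lemma boundary_lemma (σ C a b W K : ℝ) (h1 : σ / 2 ≤ C * (a + b)) (h2 : W * (a ^ 2 + b ^ 2) ≤ 2 * K)
    (hW4 : 17 * C ^ 2 * K + 1 ≤ σ ^ 2 * W) (hσ : 0 < σ) (hC : 0 ≤ C) (hW : 0 < W) (hK : 0 < K)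
    (ha : 0 ≤ a) (hb : 0 ≤ b) : False := by
  have e1 : σ ^ 2 ≤ 4 * C ^ 2 * (a + b) ^ 2 := by nlinarith
  have e2' : σ ^ 2 ≤ 8 * C ^ 2 * (a ^ 2 + b ^ 2) := by nlinarith [sq_nonneg (a - b), sq_nonneg C]
  have e3 : σ ^ 2 * W ≤ 8 * C ^ 2 * (W * (a ^ 2 + b ^ 2)) :=
    calc σ ^ 2 * W ≤ (8 * C ^ 2 * (a ^ 2 + b ^ 2)) * W := mul_le_mul_of_nonneg_right e2' hW.le
      _ = 8 * C ^ 2 * (W * (a ^ 2 + b ^ 2)) := by ring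
  have e4 : 8 * C ^ 2 * (W * (a ^ 2 + b ^ 2)) ≤ 8 * C ^ 2 * (2 * K) :=
    mul_le_mul_of_nonneg_left h2 (by positivity)
  have e5 : 0 ≤ C ^ 2 * K := mul_nonneg (sq_nonneg C) hK.le
  linarith

lemma final_lemma (lam M a g W C K de : ℝ)
    (hlam : 0 < lam) (hM : 0 ≤ M) (hW : 0 < W) (hg : 0 ≤ g) (ha : 0 ≤ a)
    (hK : 1 ≤ K) (hde : 0 < de) (hC : 0 ≤ C)
    (hfin : lam ≤ M * (a + 2 * g))
    (hWa : W * a ≤ 2 * (C + g)) (hg1 : g ≤ 1)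
    (hg2 : g ^ 2 ≤ 2 * de * K)
    (hde3 : de * (8 * M ^ 2 * K + 1) ≤ (lam / 4) ^ 2)
    (hW3 : 8 * M * (C + 1) + 1 ≤ lam * W) : False := by
  have hMa : M * a ≤ lam / 4 := by
    have h1 : W * (M * a) ≤ 2 * M * (C + 1) := by nlinarith
    have h2 : 2 * M * (C + 1) ≤ lam * W / 4 := by nlinarith
    have h3 : W * (M * a) ≤ W * (lam / 4) := by nlinarith
    exact le_of_mul_le_mul_left (by nlinarith) hW
  have hMg : 2 * M * g ≤ lam / 4 := by
    have h1 : (2 * M * g) ^ 2 ≤ 8 * M ^ 2 * K * de := by nlinarith [sq_nonneg M, sq_nonneg g, mul_nonneg hM hg]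
    have h2 : (2 * M * g) ^ 2 ≤ (lam / 4) ^ 2 := by nlinarith [mul_pos hde (by linarith : (0:ℝ) < 1)]
    nlinarith [mul_nonneg (mul_nonneg (by norm_num : (0:ℝ) ≤ 2) hM) hg]
  nlinarith

end ViscAux

lemma floor_norm_bound {n : ℕ} (x : EuclideanSpace ℝ (Fin n)) :
    ‖x - (show EuclideanSpace ℝ (Fin n) from WithLp.toLp 2 (fun i => ((⌊x i⌋ : ℤ) : ℝ)))‖ ≤ Real.sqrt n := by
  have h2 : ‖x - (show EuclideanSpace ℝ (Fin n) from WithLp.toLp 2 (fun i => ((⌊x i⌋ : ℤ) : ℝ)))‖ ^ 2 ≤ n := by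
    rw [EuclideanSpace.norm_eq, Real.sq_sqrt (by positivity)]
    calc ∑ i, ‖(x - (show EuclideanSpace ℝ (Fin n) from WithLp.toLp 2 (fun i => ((⌊x i⌋ : ℤ) : ℝ)))) i‖^2
        ≤ ∑ _i : Fin n, (1:ℝ) := by
          apply Finset.sum_le_sum
          intro i _
          have h : (x - (show EuclideanSpace ℝ (Fin n) from WithLp.toLp 2 (fun i => ((⌊x i⌋ : ℤ) : ℝ)))) i
              = Int.fract (x i) := rfl
          rw [h, Real.norm_eq_abs, abs_of_nonneg (Int.fract_nonneg _)]
          nlinarith [Int.fract_nonneg (x i), Int.fract_lt_one (x i)]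
      _ = n := by simp
  nlinarith [norm_nonneg (x - (show EuclideanSpace ℝ (Fin n) from WithLp.toLp 2 (fun i => ((⌊x i⌋ : ℤ) : ℝ)))),
    Real.sqrt_nonneg (n:ℝ), Real.sq_sqrt (by positivity : (0:ℝ) ≤ (n:ℝ))]

lemma modulus_of_H {n : ℕ} (H : EuclideanSpace ℝ (Fin n) × EuclideanSpace ℝ (Fin n) → ℝ)
    (hC2 : ContDiff ℝ 2 H)
    (hper : ∀ (k : Fin n → ℤ) (x p : EuclideanSpace ℝ (Fin n)),
      H (x + (show EuclideanSpace ℝ (Fin n) from WithLp.toLp 2 (fun i => (k i : ℝ))), p) = H (x, p))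
    (Rp : ℝ) (hRp : 0 ≤ Rp) :
    ∃ M : ℝ, 0 ≤ M ∧ ∀ x y p p' : EuclideanSpace ℝ (Fin n), ‖p‖ ≤ Rp → ‖p'‖ ≤ Rp →
      ‖x - y‖ ≤ 1 → |H (x, p) - H (y, p')| ≤ M * (‖x - y‖ + ‖p - p'‖) := by
  classical
  set Q : Set (EuclideanSpace ℝ (Fin n) × EuclideanSpace ℝ (Fin n)) :=
    (Metric.closedBall 0 (Real.sqrt n + 1)) ×ˢ (Metric.closedBall 0 Rp) with hQ
  have hQc : IsCompact Q := (isCompact_closedBall _ _).prod (isCompact_closedBall _ _)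
  have hQconv : Convex ℝ Q := (convex_closedBall _ _).prod (convex_closedBall _ _)
  have hdiff : Differentiable ℝ H := hC2.differentiable (by norm_num)
  obtain ⟨M0, hM0⟩ := hQc.exists_bound_of_continuousOn (hC2.continuous_fderiv (by norm_num)).continuousOn
  refine ⟨max M0 0, le_max_right _ _, ?_⟩
  intro x y p p' hp hp' hxy
  set k : Fin n → ℤ := fun i => ⌊x i⌋ with hk
  set kE : EuclideanSpace ℝ (Fin n) := (show EuclideanSpace ℝ (Fin n) from WithLp.toLp 2 (fun i => ((k i : ℤ) : ℝ))) with hkE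
  have e1 : H (x, p) = H (x - kE, p) := by
    have := hper k (x - kE) p
    rwa [sub_add_cancel] at this
  have e2 : H (y, p') = H (y - kE, p') := by
    have := hper k (y - kE) p'
    rwa [sub_add_cancel] at this
  have hxk : ‖x - kE‖ ≤ Real.sqrt n := floor_norm_bound x
  have hyk : ‖y - kE‖ ≤ Real.sqrt n + 1 := by
    have : y - kE = (x - kE) - (x - y) := by abel
    rw [this]
    calc ‖(x - kE) - (x - y)‖ ≤ ‖x - kE‖ + ‖x - y‖ := norm_sub_le _ _
      _ ≤ Real.sqrt n + 1 := by linarith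
  have hmem1 : ((x - kE, p) : _) ∈ Q := by
    constructor
    · simpa [Metric.mem_closedBall, dist_eq_norm] using le_trans hxk (by linarith [Real.sqrt_nonneg (n:ℝ)])
    · simpa [Metric.mem_closedBall, dist_eq_norm] using hp
  have hmem2 : ((y - kE, p') : _) ∈ Q := by
    constructor
    · simpa [Metric.mem_closedBall, dist_eq_norm] using hyk
    · simpa [Metric.mem_closedBall, dist_eq_norm] using hp'
  have key : ‖H (x - kE, p) - H (y - kE, p')‖ ≤ (max M0 0) * ‖(x - kE, p) - (y - kE, p')‖ := by
    apply hQconv.norm_image_sub_le_of_norm_fderiv_le (fun z _ => hdiff z)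
      (fun z hz => le_trans (hM0 z hz) (le_max_left _ _)) hmem2 hmem1
  rw [e1, e2]
  have hnorm : ‖((x - kE, p) : _) - (y - kE, p')‖ ≤ ‖x - y‖ + ‖p - p'‖ := by
    rw [Prod.mk_sub_mk, Prod.norm_def]
    have : (x - kE) - (y - kE) = x - y := by abel
    rw [this]
    exact max_le (le_add_of_nonneg_right (norm_nonneg _)) (le_add_of_nonneg_left (norm_nonneg _))
  calc |H (x - kE, p) - H (y - kE, p')| = ‖H (x - kE, p) - H (y - kE, p')‖ := (Real.norm_eq_abs _).symm
    _ ≤ (max M0 0) * ‖((x - kE, p) : _) - (y - kE, p')‖ := key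
    _ ≤ (max M0 0) * (‖x - y‖ + ‖p - p'‖) := mul_le_mul_of_nonneg_left hnorm (le_max_right _ _)

set_option maxHeartbeats 2000000 in
lemma comparison_le {n : ℕ} (H : EuclideanSpace ℝ (Fin n) × EuclideanSpace ℝ (Fin n) → ℝ)
    (hHmod : ∀ Rp : ℝ, 0 ≤ Rp → ∃ M : ℝ, 0 ≤ M ∧ ∀ x y p p' : EuclideanSpace ℝ (Fin n),
      ‖p‖ ≤ Rp → ‖p'‖ ≤ Rp → ‖x - y‖ ≤ 1 → |H (x, p) - H (y, p')| ≤ M * (‖x - y‖ + ‖p - p'‖))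
    (u v : EuclideanSpace ℝ (Fin n) × ℝ → ℝ) (c : NNReal)
    (hu : LipschitzOnWith c u {p | 0 ≤ p.2}) (hv : LipschitzOnWith c v {p | 0 ≤ p.2})
    (husub : IsViscositySubsolutionOn (fun x p => H (x, p)) u {p | 0 < p.2})
    (hvsup : IsViscositySupersolutionOn (fun x p => H (x, p)) v {p | 0 < p.2})
    (h0 : ∀ x, u (x, 0) = v (x, 0)) :
    ∀ p : EuclideanSpace ℝ (Fin n) × ℝ, 0 ≤ p.2 → u p ≤ v p := by
  by_contra hcon
  push_neg at hcon
  obtain ⟨⟨x₀, t₀⟩, ht₀', hlt⟩ := hcon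
  have ht₀ : (0:ℝ) ≤ t₀ := ht₀'
  clear ht₀'
  obtain ⟨C, hCdef⟩ : ∃ C : ℝ, C = (c : ℝ) := ⟨_, rfl⟩
  have hC : 0 ≤ C := by rw [hCdef]; exact c.coe_nonneg
  obtain ⟨σ, hσdef⟩ : ∃ σ : ℝ, σ = u (x₀, t₀) - v (x₀, t₀) := ⟨_, rfl⟩
  have hσ : 0 < σ := by rw [hσdef]; linarith
  have ht₀pos : 0 < t₀ := by
    rcases lt_or_eq_of_le ht₀ with h | h
    · exact h
    · exfalso
      subst h
      rw [hσdef, h0 x₀] at hσ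
      simp at hσ
  -- parameters
  obtain ⟨lam, hlamdef⟩ : ∃ lam : ℝ, lam = σ / (8 * (t₀ + 1)) := ⟨_, rfl⟩
  have hlam : 0 < lam := by rw [hlamdef]; exact div_pos hσ (by linarith)
  obtain ⟨M, hM, hmod⟩ := hHmod (4 * C + 6) (by linarith)
  obtain ⟨th, hthdef⟩ : ∃ th : ℝ, th = min (σ / (8 * (t₀ ^ 2 + 1))) 1 := ⟨_, rfl⟩
  have hth : 0 < th := by
    rw [hthdef]; exact lt_min (div_pos hσ (by positivity)) one_pos
  have hth1 : th ≤ 1 := by rw [hthdef]; exact min_le_right _ _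
  obtain ⟨T, hTdef⟩ : ∃ T : ℝ, T = (3 * C + 1) / th + 1 := ⟨_, rfl⟩
  have hTth : th * T = 3 * C + 1 + th := by rw [hTdef]; field_simp
  have hT : 0 < T := by
    rw [hTdef]
    have : 0 < (3 * C + 1) / th := div_pos (by linarith) hth
    linarith
  obtain ⟨K, hKdef⟩ : ∃ K : ℝ, K = 2 * C * T + C ^ 2 + 1 := ⟨_, rfl⟩
  have hK : 1 ≤ K := by
    rw [hKdef]
    have := mul_nonneg (mul_nonneg (by norm_num : (0:ℝ) ≤ 2) hC) hT.le
    have := sq_nonneg C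
    linarith
  have hK0 : 0 < K := by linarith
  obtain ⟨W, hWdef⟩ : ∃ W : ℝ, W = max (max 1 (2 * (C + 1)))
      (max ((8 * M * (C + 1) + 1) / lam) ((17 * C ^ 2 * K + 1) / σ ^ 2)) := ⟨_, rfl⟩
  have hW1 : 1 ≤ W := by rw [hWdef]; exact le_trans (le_max_left _ _) (le_max_left _ _)
  have hW0 : 0 < W := by linarith
  have hW2 : 2 * (C + 1) ≤ W := by rw [hWdef]; exact le_trans (le_max_right _ _) (le_max_left _ _)
  have hW3 : 8 * M * (C + 1) + 1 ≤ lam * W := by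
    have h : (8 * M * (C + 1) + 1) / lam ≤ W := by
      rw [hWdef]; exact le_trans (le_max_left _ _) (le_max_right _ _)
    rw [div_le_iff₀ hlam] at h
    linarith [h]
  have hW4 : 17 * C ^ 2 * K + 1 ≤ σ ^ 2 * W := by
    have h : (17 * C ^ 2 * K + 1) / σ ^ 2 ≤ W := by
      rw [hWdef]; exact le_trans (le_max_right _ _) (le_max_right _ _)
    rw [div_le_iff₀ (by positivity)] at h
    linarith [h]
  obtain ⟨de, hdedef⟩ : ∃ de : ℝ, de = min (min (1 / (2 * K)) (σ / (16 * (‖x₀‖ ^ 2 + 1))))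
      ((lam / 4) ^ 2 / (8 * M ^ 2 * K + 1)) := ⟨_, rfl⟩
  have hMK : (0:ℝ) < 8 * M ^ 2 * K + 1 := by
    have h8 : (0:ℝ) ≤ 8 * M ^ 2 * K := mul_nonneg (by positivity) hK0.le
    linarith
  have hde : 0 < de := by
    rw [hdedef]
    apply lt_min (lt_min (by positivity) (div_pos hσ (by positivity)))
    exact div_pos (pow_pos (by linarith) 2) hMK
  have hde1 : de * (2 * K) ≤ 1 := by
    have h : de ≤ 1 / (2 * K) := by
      rw [hdedef]; exact le_trans (min_le_left _ _) (min_le_left _ _)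
    rw [le_div_iff₀ (by linarith)] at h
    linarith
  have hde2 : 2 * de * ‖x₀‖ ^ 2 ≤ σ / 8 := by
    refine ViscAux.ar_de2 de ‖x₀‖ σ hde.le (norm_nonneg _) ?_
    have h : de ≤ σ / (16 * (‖x₀‖ ^ 2 + 1)) := by
      rw [hdedef]; exact le_trans (min_le_left _ _) (min_le_right _ _)
    rw [le_div_iff₀ (by positivity)] at h
    linarith
  have hde3 : de * (8 * M ^ 2 * K + 1) ≤ (lam / 4) ^ 2 := by
    have h : de ≤ (lam / 4) ^ 2 / (8 * M ^ 2 * K + 1) := by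
      rw [hdedef]; exact min_le_right _ _
    rw [le_div_iff₀ hMK] at h
    linarith
  -- the doubled function
  obtain ⟨Φ, hΦdef⟩ : ∃ Φ : (EuclideanSpace ℝ (Fin n) × ℝ) × (EuclideanSpace ℝ (Fin n) × ℝ) → ℝ,
      Φ = fun z => u z.1 - v z.2 - lam * z.1.2 - th * z.1.2 ^ 2
        - W * (‖z.1.1 - z.2.1‖ ^ 2 + (z.1.2 - z.2.2) ^ 2)
        - de * (‖z.1.1‖ ^ 2 + ‖z.2.1‖ ^ 2) := ⟨_, rfl⟩
  have hΦval : ∀ (z1 z2 : EuclideanSpace ℝ (Fin n) × ℝ),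
      Φ (z1, z2) = u z1 - v z2 - lam * z1.2 - th * z1.2 ^ 2
        - W * (‖z1.1 - z2.1‖ ^ 2 + (z1.2 - z2.2) ^ 2)
        - de * (‖z1.1‖ ^ 2 + ‖z2.1‖ ^ 2) := by
    intro z1 z2; rw [hΦdef]
  obtain ⟨D, hDdef⟩ : ∃ D : Set ((EuclideanSpace ℝ (Fin n) × ℝ) × (EuclideanSpace ℝ (Fin n) × ℝ)),
      D = {z | 0 ≤ z.1.2 ∧ 0 ≤ z.2.2} := ⟨_, rfl⟩
  have hz₀D : (((x₀, t₀), (x₀, t₀)) : _) ∈ D := by rw [hDdef]; exact ⟨ht₀, ht₀⟩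
  have hlamt₀ : lam * t₀ ≤ σ / 8 := by rw [hlamdef]; exact ViscAux.ar_lam σ t₀ hσ ht₀pos
  have htht₀ : th * t₀ ^ 2 ≤ σ / 8 := by
    refine ViscAux.ar_th σ t₀ th ?_ hth.le
    have h : th ≤ σ / (8 * (t₀ ^ 2 + 1)) := by rw [hthdef]; exact min_le_left _ _
    rw [le_div_iff₀ (by positivity)] at h
    linarith
  have hΦz₀ : σ / 2 ≤ Φ ((x₀, t₀), (x₀, t₀)) := by
    rw [hΦval]
    simp only [sub_self, norm_zero]
    rw [← hσdef]
    have e : de * (‖x₀‖ ^ 2 + ‖x₀‖ ^ 2) = 2 * de * ‖x₀‖ ^ 2 := by ring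
    norm_num
    linarith [hlamt₀, htht₀, hde2, e]
  -- Lipschitz estimates
  have hsub_dist : ∀ w1 w2 : ℝ, dist w1 w2 = |w1 - w2| := fun w1 w2 => rfl
  have huLip : ∀ (x y : EuclideanSpace ℝ (Fin n)) (t s : ℝ), 0 ≤ t → 0 ≤ s →
      u (x, t) - u (y, s) ≤ C * (‖x - y‖ + |t - s|) := by
    intro x y t s ht hs
    have h1 := hu.dist_le_mul (x, t) ht (y, s) hs
    have h2 : u (x, t) - u (y, s) ≤ dist (u (x, t)) (u (y, s)) := by
      rw [Real.dist_eq]; exact le_abs_self _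
    have h3 : dist ((x, t) : EuclideanSpace ℝ (Fin n) × ℝ) ((y, s)) = max ‖x - y‖ |t - s| := by
      rw [Prod.dist_eq, dist_eq_norm, Real.dist_eq]
    have h4 : max ‖x - y‖ |t - s| ≤ ‖x - y‖ + |t - s| :=
      max_le (le_add_of_nonneg_right (abs_nonneg _)) (le_add_of_nonneg_left (norm_nonneg _))
    have h5 : (c : ℝ) * max ‖x - y‖ |t - s| ≤ C * (‖x - y‖ + |t - s|) := by
      rw [← hCdef]
      exact mul_le_mul_of_nonneg_left h4 hC
    rw [h3] at h1
    linarith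
  have hvLip : ∀ (x y : EuclideanSpace ℝ (Fin n)) (t s : ℝ), 0 ≤ t → 0 ≤ s →
      v (x, t) - v (y, s) ≤ C * (‖x - y‖ + |t - s|) := by
    intro x y t s ht hs
    have h1 := hv.dist_le_mul (x, t) ht (y, s) hs
    have h2 : v (x, t) - v (y, s) ≤ dist (v (x, t)) (v (y, s)) := by
      rw [Real.dist_eq]; exact le_abs_self _
    have h3 : dist ((x, t) : EuclideanSpace ℝ (Fin n) × ℝ) ((y, s)) = max ‖x - y‖ |t - s| := by
      rw [Prod.dist_eq, dist_eq_norm, Real.dist_eq]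
    have h4 : max ‖x - y‖ |t - s| ≤ ‖x - y‖ + |t - s| :=
      max_le (le_add_of_nonneg_right (abs_nonneg _)) (le_add_of_nonneg_left (norm_nonneg _))
    have h5 : (c : ℝ) * max ‖x - y‖ |t - s| ≤ C * (‖x - y‖ + |t - s|) := by
      rw [← hCdef]
      exact mul_le_mul_of_nonneg_left h4 hC
    rw [h3] at h1
    linarith
  have huv : ∀ (x y : EuclideanSpace ℝ (Fin n)) (t s : ℝ), 0 ≤ t → 0 ≤ s →
      u (x, t) - v (y, s) ≤ 2 * C * t + C * (‖x - y‖ + |t - s|) := by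
    intro x y t s ht hs
    have l1 : u (x, t) - u (x, 0) ≤ C * t := by
      have := huLip x x t 0 ht le_rfl
      simp only [sub_self, norm_zero, sub_zero, zero_add] at this
      rw [abs_of_nonneg ht] at this
      linarith
    have l2 : v (x, 0) - v (x, t) ≤ C * t := by
      have := hvLip x x 0 t le_rfl ht
      simp only [sub_self, norm_zero, zero_sub, zero_add, abs_neg] at this
      rw [abs_of_nonneg ht] at this
      linarith
    have l3 : v (x, t) - v (y, s) ≤ C * (‖x - y‖ + |t - s|) := hvLip x y t s ht hs
    have l4 := h0 x
    linarith
  -- master bound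
  have hbound : ∀ z : (EuclideanSpace ℝ (Fin n) × ℝ) × (EuclideanSpace ℝ (Fin n) × ℝ),
      z ∈ D → σ / 2 ≤ Φ z →
      z.1.2 ≤ T ∧ z.2.2 ≤ T + 1 + 2 * K ∧
      W * (‖z.1.1 - z.2.1‖ ^ 2 + |z.1.2 - z.2.2| ^ 2) ≤ 2 * K ∧
      de * (‖z.1.1‖ ^ 2 + ‖z.2.1‖ ^ 2) ≤ K := by
    rintro ⟨⟨x, t⟩, y, s⟩ hzD hΦz
    rw [hDdef] at hzD
    obtain ⟨hzt, hzs⟩ := hzD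
    have hzt : (0:ℝ) ≤ t := hzt
    have hzs : (0:ℝ) ≤ s := hzs
    rw [hΦval] at hΦz
    have habs : ((t : ℝ) - s) ^ 2 = |t - s| ^ 2 := (sq_abs _).symm
    rw [habs] at hΦz
    have h1 := huv x y t s hzt hzs
    have hmain : th * t ^ 2 + W * (‖x - y‖ ^ 2 + |t - s| ^ 2) + de * (‖x‖ ^ 2 + ‖y‖ ^ 2)
        + lam * t + σ / 2 ≤ 2 * C * t + C * (‖x - y‖ + |t - s|) := by
      simp only at hΦz
      linarith
    have hbs : s ≤ t + |t - s| := by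
      rcases abs_cases (t - s) with ⟨h, _⟩ | ⟨h, _⟩ <;> linarith
    exact ViscAux.bounds_lemma C W de th lam T K σ t s ‖x - y‖ |t - s| (‖x‖ ^ 2 + ‖y‖ ^ 2)
      hC hW1 hde hth hth1 hTth hKdef hzt hzs (norm_nonneg _) (abs_nonneg _)
      (by positivity) hσ hlam.le hbs hmain

  -- radius and compact set
  obtain ⟨R, hRdef⟩ : ∃ R : ℝ, R = (T + 1 + 2 * K) + (1 + K / de) + ‖x₀‖ + t₀ + 1 := ⟨_, rfl⟩
  have hKde0 : 0 < K / de := div_pos hK0 hde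
  have hRz : ∀ z : (EuclideanSpace ℝ (Fin n) × ℝ) × (EuclideanSpace ℝ (Fin n) × ℝ),
      z ∈ D → σ / 2 ≤ Φ z → z ∈ Metric.closedBall 0 R := by
    rintro ⟨⟨x, t⟩, y, s⟩ hzD hΦz
    obtain ⟨h1, h2, h3, h4⟩ := hbound _ hzD hΦz
    simp only at h1 h2 h3 h4
    rw [hDdef] at hzD
    obtain ⟨hzt, hzs⟩ := hzD
    have hzt : (0:ℝ) ≤ t := hzt
    have hzs : (0:ℝ) ≤ s := hzs
    have hx : ‖x‖ ≤ 1 + K / de := by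
      refine ViscAux.norm_bd de K ‖x‖ hde ?_ (norm_nonneg _)
      have h5 := mul_nonneg hde.le (sq_nonneg ‖y‖)
      have h6 : de * (‖x‖ ^ 2 + ‖y‖ ^ 2) = de * ‖x‖ ^ 2 + de * ‖y‖ ^ 2 := by ring
      linarith [h4]
    have hy : ‖y‖ ≤ 1 + K / de := by
      refine ViscAux.norm_bd de K ‖y‖ hde ?_ (norm_nonneg _)
      have h5 := mul_nonneg hde.le (sq_nonneg ‖x‖)
      have h6 : de * (‖x‖ ^ 2 + ‖y‖ ^ 2) = de * ‖x‖ ^ 2 + de * ‖y‖ ^ 2 := by ring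
      linarith [h4]
    rw [mem_closedBall_zero_iff]
    have hnorm : ‖(((x, t), (y, s)) : (EuclideanSpace ℝ (Fin n) × ℝ) × (EuclideanSpace ℝ (Fin n) × ℝ))‖
        = max (max ‖x‖ |t|) (max ‖y‖ |s|) := by
      rw [Prod.norm_def, Prod.norm_def, Prod.norm_def, Real.norm_eq_abs, Real.norm_eq_abs]
    rw [hnorm, abs_of_nonneg hzt, abs_of_nonneg hzs]
    have hxn := norm_nonneg x₀
    apply max_le (max_le (by linarith) (by linarith)) (max_le (by linarith) (by linarith))
  have hDclosed : IsClosed D := by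
    rw [hDdef]
    exact IsClosed.inter (isClosed_le continuous_const continuous_fst.snd)
      (isClosed_le continuous_const continuous_snd.snd)
  obtain ⟨Kc, hKcdef⟩ : ∃ Kc, Kc = D ∩ Metric.closedBall 0 R := ⟨_, rfl⟩
  have hKcComp : IsCompact Kc := by
    rw [hKcdef]; exact (isCompact_closedBall _ _).inter_left hDclosed
  have hKcD : Kc ⊆ D := by rw [hKcdef]; exact inter_subset_left
  have hΦcont : ContinuousOn Φ Kc := by
    rw [hΦdef]
    have c1 : ContinuousOn (fun z : (EuclideanSpace ℝ (Fin n) × ℝ) × (EuclideanSpace ℝ (Fin n) × ℝ) => u z.1) Kc := by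
      apply hu.continuousOn.comp continuous_fst.continuousOn
      intro z hz
      exact (by rw [hDdef] at hKcD; exact (hKcD hz).1 : (0:ℝ) ≤ z.1.2)
    have c2 : ContinuousOn (fun z : (EuclideanSpace ℝ (Fin n) × ℝ) × (EuclideanSpace ℝ (Fin n) × ℝ) => v z.2) Kc := by
      apply hv.continuousOn.comp continuous_snd.continuousOn
      intro z hz
      exact (by rw [hDdef] at hKcD; exact (hKcD hz).2 : (0:ℝ) ≤ z.2.2)
    have c3 : Continuous (fun z : (EuclideanSpace ℝ (Fin n) × ℝ) × (EuclideanSpace ℝ (Fin n) × ℝ) =>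
        lam * z.1.2) := by fun_prop
    have c4 : Continuous (fun z : (EuclideanSpace ℝ (Fin n) × ℝ) × (EuclideanSpace ℝ (Fin n) × ℝ) =>
        th * z.1.2 ^ 2) := by fun_prop
    have c5 : Continuous (fun z : (EuclideanSpace ℝ (Fin n) × ℝ) × (EuclideanSpace ℝ (Fin n) × ℝ) =>
        W * (‖z.1.1 - z.2.1‖ ^ 2 + (z.1.2 - z.2.2) ^ 2)) := by fun_prop
    have c6 : Continuous (fun z : (EuclideanSpace ℝ (Fin n) × ℝ) × (EuclideanSpace ℝ (Fin n) × ℝ) =>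
        de * (‖z.1.1‖ ^ 2 + ‖z.2.1‖ ^ 2)) := by fun_prop
    exact ((((c1.sub c2).sub c3.continuousOn).sub c4.continuousOn).sub c5.continuousOn).sub c6.continuousOn
  have hz₀Kc : (((x₀, t₀), (x₀, t₀)) : _) ∈ Kc := by
    rw [hKcdef]; exact ⟨hz₀D, hRz _ hz₀D hΦz₀⟩
  obtain ⟨zh, hzhKc, hzhmax⟩ := hKcComp.exists_isMaxOn ⟨_, hz₀Kc⟩ hΦcont
  have hmaxKc : ∀ z ∈ Kc, Φ z ≤ Φ zh := fun z hz => isMaxOn_iff.mp hzhmax z hz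
  have hΦzh : σ / 2 ≤ Φ zh := le_trans hΦz₀ (hmaxKc _ hz₀Kc)
  have hzhD : zh ∈ D := hKcD hzhKc
  have hglob : ∀ z ∈ D, Φ z ≤ Φ zh := by
    intro z hz
    by_cases hc : σ / 2 ≤ Φ z
    · exact hmaxKc z (by rw [hKcdef]; exact ⟨hz, hRz z hz hc⟩)
    · push_neg at hc; linarith
  -- destructure the max point
  obtain ⟨⟨xh, t1⟩, yh, s1⟩ := zh
  rw [hDdef] at hzhD
  obtain ⟨ht1', hs1'⟩ := hzhD
  have ht1 : (0:ℝ) ≤ t1 := ht1'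
  have hs1 : (0:ℝ) ≤ s1 := hs1'
  obtain ⟨hb1, hb2, hb3, hb4⟩ := hbound _ (by rw [hDdef]; exact ⟨ht1, hs1⟩) hΦzh
  simp only at hb1 hb2 hb3 hb4
  obtain ⟨g, hgdef⟩ : ∃ g : ℝ, g = de * (‖xh‖ + ‖yh‖) := ⟨_, rfl⟩
  have hg0 : 0 ≤ g := by
    rw [hgdef]; exact mul_nonneg hde.le (add_nonneg (norm_nonneg _) (norm_nonneg _))
  have hgsq : g ^ 2 ≤ 2 * de * K := by
    rw [hgdef]; exact ViscAux.g_sq de ‖xh‖ ‖yh‖ K hde.le hb4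
  have hgle1 : g ≤ 1 := by
    refine ViscAux.le_one_of_sq g ?_ hg0
    have e : 2 * de * K = de * (2 * K) := by ring
    linarith
  -- refined gradient bound
  have hrefmem : ((((xh, t1), (xh, t1))) : (EuclideanSpace ℝ (Fin n) × ℝ) × (EuclideanSpace ℝ (Fin n) × ℝ)) ∈ D := by
    rw [hDdef]; exact ⟨ht1, ht1⟩
  have href0 := hglob _ hrefmem
  rw [hΦval, hΦval] at href0
  simp only [sub_self, norm_zero] at href0
  have habs2 : ((t1:ℝ) - s1) ^ 2 = |t1 - s1| ^ 2 := (sq_abs _).symm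
  rw [habs2] at href0
  have hvv : v (xh, t1) - v (yh, s1) ≤ C * (‖xh - yh‖ + |t1 - s1|) := hvLip xh yh t1 s1 ht1 hs1
  have hnn : |‖xh‖ - ‖yh‖| ≤ ‖xh - yh‖ := abs_norm_sub_norm_le xh yh
  have hsqd : de * (‖xh‖ ^ 2 - ‖yh‖ ^ 2) ≤ de * (‖xh‖ + ‖yh‖) * ‖xh - yh‖ :=
    ViscAux.sq_diff_bd de ‖xh‖ ‖yh‖ ‖xh - yh‖ hde.le (norm_nonneg _) (norm_nonneg _) hnn
  have hrefined : W * (‖xh - yh‖ ^ 2 + |t1 - s1| ^ 2)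
      ≤ C * (‖xh - yh‖ + |t1 - s1|) + g * ‖xh - yh‖ := by
    rw [hgdef]
    linarith [href0, hvv, hsqd]
  have hWa : W * ‖xh - yh‖ ≤ 2 * (C + g) :=
    ViscAux.refined_lemma W C g ‖xh - yh‖ |t1 - s1| hW0 hC hg0 (norm_nonneg _) (abs_nonneg _) hrefined
  have ha1 : ‖xh - yh‖ ≤ 1 := by
    have h1 : W * ‖xh - yh‖ ≤ W * 1 := by linarith [hWa, hgle1, hW2]
    exact le_of_mul_le_mul_left h1 hW0
  -- boundary cases are impossible
  have hbdy : t1 = 0 ∨ s1 = 0 → False := by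
    intro hcase
    have hpen : Φ ((xh, t1), (yh, s1)) ≤ u (xh, t1) - v (yh, s1) := by
      rw [hΦval]
      have p1 : 0 ≤ lam * t1 := mul_nonneg hlam.le ht1
      have p2 : 0 ≤ th * t1 ^ 2 := mul_nonneg hth.le (sq_nonneg _)
      have p3 : 0 ≤ W * (‖xh - yh‖ ^ 2 + (t1 - s1) ^ 2) :=
        mul_nonneg hW0.le (add_nonneg (sq_nonneg _) (sq_nonneg _))
      have p4 : 0 ≤ de * (‖xh‖ ^ 2 + ‖yh‖ ^ 2) :=
        mul_nonneg hde.le (add_nonneg (sq_nonneg _) (sq_nonneg _))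
      simp only
      linarith
    have hub : u (xh, t1) - v (yh, s1) ≤ C * (‖xh - yh‖ + |t1 - s1|) := by
      rcases hcase with h | h
      · subst h
        rw [h0 xh]
        exact hvLip xh yh 0 s1 le_rfl hs1
      · subst h
        rw [show v (yh, (0:ℝ)) = u (yh, 0) from (h0 yh).symm]
        exact huLip xh yh t1 0 ht1 le_rfl
    exact ViscAux.boundary_lemma σ C ‖xh - yh‖ |t1 - s1| W K
      (by linarith [hΦzh, hpen, hub]) hb3 hW4 hσ hC hW0 hK0 (norm_nonneg _) (abs_nonneg _)
  have ht1pos : (0:ℝ) < t1 := lt_of_le_of_ne ht1 (fun h => hbdy (Or.inl h.symm))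
  have hs1pos : (0:ℝ) < s1 := lt_of_le_of_ne hs1 (fun h => hbdy (Or.inr h.symm))
  -- test functions
  obtain ⟨φ, hφdef⟩ : ∃ φ : EuclideanSpace ℝ (Fin n) × ℝ → ℝ,
      φ = fun p => lam * p.2 + th * p.2 ^ 2 + W * (‖p.1 - yh‖ ^ 2 + (p.2 - s1) ^ 2)
        + de * ‖p.1‖ ^ 2 := ⟨_, rfl⟩
  have hφC1 : ContDiff ℝ 1 φ := by
    rw [hφdef]
    apply ContDiff.add
    apply ContDiff.add
    apply ContDiff.add
    · exact contDiff_const.mul contDiff_snd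
    · exact contDiff_const.mul (contDiff_snd.pow 2)
    · exact contDiff_const.mul ((((contDiff_fst.sub contDiff_const).norm_sq ℝ)).add
        ((contDiff_snd.sub contDiff_const).pow 2))
    · exact contDiff_const.mul (contDiff_fst.norm_sq ℝ)
  have hφmax : IsLocalMaxOn (fun p => u p - φ p)
      {p : EuclideanSpace ℝ (Fin n) × ℝ | 0 < p.2} (xh, t1) := by
    apply Filter.eventually_iff_exists_mem.2
    refine ⟨{p | 0 < p.2}, self_mem_nhdsWithin, ?_⟩
    intro p hp
    have hp2 : (0:ℝ) < p.2 := hp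
    have h := hglob (p, (yh, s1)) (by rw [hDdef]; exact ⟨hp2.le, hs1⟩)
    rw [hΦval, hΦval] at h
    simp only at h
    simp only [hφdef]
    linarith [h]
  obtain ⟨ψ, hψdef⟩ : ∃ ψ : EuclideanSpace ℝ (Fin n) × ℝ → ℝ,
      ψ = fun p => -(W * (‖xh - p.1‖ ^ 2 + (t1 - p.2) ^ 2)) - de * ‖p.1‖ ^ 2 := ⟨_, rfl⟩
  have hψC1 : ContDiff ℝ 1 ψ := by
    rw [hψdef]
    apply ContDiff.sub
    · apply ContDiff.neg
      exact contDiff_const.mul ((((contDiff_const.sub contDiff_fst).norm_sq ℝ)).add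
        ((contDiff_const.sub contDiff_snd).pow 2))
    · exact contDiff_const.mul (contDiff_fst.norm_sq ℝ)
  have hψmin : IsLocalMinOn (fun p => v p - ψ p)
      {p : EuclideanSpace ℝ (Fin n) × ℝ | 0 < p.2} (yh, s1) := by
    apply Filter.eventually_iff_exists_mem.2
    refine ⟨{p | 0 < p.2}, self_mem_nhdsWithin, ?_⟩
    intro p hp
    have hp2 : (0:ℝ) < p.2 := hp
    have h := hglob ((xh, t1), p) (by rw [hDdef]; exact ⟨ht1, hp2.le⟩)
    rw [hΦval, hΦval] at h
    simp only at h
    simp only [hψdef]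
    linarith [h]
  -- derivative computations
  have hd1 : deriv (fun t => φ (xh, t)) t1 = lam + 2 * th * t1 + W * (2 * (t1 - s1)) := by
    rw [hφdef]
    have h1 : HasDerivAt (fun t : ℝ => (t - s1) ^ 2) (2 * (t1 - s1)) t1 := by
      simpa using ((hasDerivAt_id t1).sub_const s1).fun_pow 2
    have h2 := (((hasDerivAt_id t1).const_mul lam).add
        (((hasDerivAt_id t1).pow 2).const_mul th)).add
      (((hasDerivAt_const t1 (‖xh - yh‖ ^ 2)).add h1).const_mul W)
      |>.add (hasDerivAt_const t1 (de * ‖xh‖ ^ 2))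
    have h3 : HasDerivAt (fun t : ℝ => lam * t + th * t ^ 2
        + W * (‖xh - yh‖ ^ 2 + (t - s1) ^ 2) + de * ‖xh‖ ^ 2)
        (lam + 2 * th * t1 + W * (2 * (t1 - s1))) t1 := by
      refine h2.congr_deriv ?_
      simp only [id_eq]
      ring
    exact h3.deriv
  have hd2 : deriv (fun s => ψ (yh, s)) s1 = W * (2 * (t1 - s1)) := by
    rw [hψdef]
    have h1 : HasDerivAt (fun s : ℝ => (t1 - s) ^ 2) (2 * (t1 - s1) * (-1)) s1 := by
      simpa using ((hasDerivAt_id s1).const_sub t1).fun_pow 2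
    have h2 := ((((hasDerivAt_const s1 (‖xh - yh‖ ^ 2)).add h1).const_mul W).neg).sub
      (hasDerivAt_const s1 (de * ‖yh‖ ^ 2))
    have h3 : HasDerivAt (fun s : ℝ => -(W * (‖xh - yh‖ ^ 2 + (t1 - s) ^ 2)) - de * ‖yh‖ ^ 2)
        (W * (2 * (t1 - s1))) s1 := by
      refine h2.congr_deriv ?_
      ring
    exact h3.deriv
  have hgrad1 : gradient (fun x => φ (x, t1)) xh = (2 * W) • (xh - yh) + (2 * de) • xh := by
    rw [hφdef]
    have hg' : HasGradientAt (fun x : EuclideanSpace ℝ (Fin n) => lam * t1 + th * t1 ^ 2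
        + W * (‖x - yh‖ ^ 2 + (t1 - s1) ^ 2) + de * ‖x‖ ^ 2)
        ((2 * W) • (xh - yh) + (2 * de) • xh) xh := by
      rw [hasGradientAt_iff_hasFDerivAt]
      have F1 : HasFDerivAt (fun x : EuclideanSpace ℝ (Fin n) => ‖x - yh‖ ^ 2)
          (2 • (innerSL ℝ (xh - yh)).comp (ContinuousLinearMap.id ℝ (EuclideanSpace ℝ (Fin n)))) xh := by
        simpa using ((hasFDerivAt_id xh).sub_const yh).norm_sq
      have F2 : HasFDerivAt (fun x : EuclideanSpace ℝ (Fin n) => ‖x‖ ^ 2)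
          (2 • (innerSL ℝ xh).comp (ContinuousLinearMap.id ℝ (EuclideanSpace ℝ (Fin n)))) xh := by
        simpa using (hasFDerivAt_id xh).norm_sq
      have F := (((hasFDerivAt_const (lam * t1) xh).add (hasFDerivAt_const (th * t1 ^ 2) xh)).add
        ((F1.add (hasFDerivAt_const ((t1 - s1) ^ 2) xh)).const_mul W)).add (F2.const_mul de)
      refine F.congr_fderiv ?_
      ext w
      simp [InnerProductSpace.toDual, real_inner_smul_left, inner_add_left, two_smul, inner_sub_left]
      ring
    exact hg'.gradient
  have hgrad2 : gradient (fun y => ψ (y, s1)) yh = (2 * W) • (xh - yh) - (2 * de) • yh := by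
    rw [hψdef]
    have hg' : HasGradientAt (fun y : EuclideanSpace ℝ (Fin n) =>
        -(W * (‖xh - y‖ ^ 2 + (t1 - s1) ^ 2)) - de * ‖y‖ ^ 2)
        ((2 * W) • (xh - yh) - (2 * de) • yh) yh := by
      rw [hasGradientAt_iff_hasFDerivAt]
      have F1 : HasFDerivAt (fun y : EuclideanSpace ℝ (Fin n) => ‖xh - y‖ ^ 2)
          (2 • (innerSL ℝ (xh - yh)).comp (-(ContinuousLinearMap.id ℝ (EuclideanSpace ℝ (Fin n))))) yh := by
        simpa using ((hasFDerivAt_id yh).const_sub xh).norm_sq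
      have F2 : HasFDerivAt (fun y : EuclideanSpace ℝ (Fin n) => ‖y‖ ^ 2)
          (2 • (innerSL ℝ yh).comp (ContinuousLinearMap.id ℝ (EuclideanSpace ℝ (Fin n)))) yh := by
        simpa using (hasFDerivAt_id yh).norm_sq
      have F := ((((F1.add (hasFDerivAt_const ((t1 - s1) ^ 2) yh)).const_mul W).neg).sub
        (F2.const_mul de))
      refine F.congr_fderiv ?_
      ext w
      simp [InnerProductSpace.toDual, real_inner_smul_left, inner_add_left, two_smul, inner_sub_left]
      ring
    exact hg'.gradient
  -- apply the viscosity properties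
  have hsub := husub φ hφC1 (xh, t1) ht1pos hφmax
  have hsup := hvsup ψ hψC1 (yh, s1) hs1pos hψmin
  simp only at hsub hsup
  rw [hd1, hgrad1] at hsub
  rw [hd2, hgrad2] at hsup
  -- norm estimates for the gradients
  have hnq : ‖(2 * W) • (xh - yh)‖ = 2 * W * ‖xh - yh‖ := by
    rw [norm_smul, Real.norm_eq_abs, abs_of_nonneg (by linarith : (0:ℝ) ≤ 2 * W)]
  have hnx : ‖(2 * de) • xh‖ = 2 * de * ‖xh‖ := by
    rw [norm_smul, Real.norm_eq_abs, abs_of_nonneg (by linarith : (0:ℝ) ≤ 2 * de)]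
  have hny : ‖(2 * de) • yh‖ = 2 * de * ‖yh‖ := by
    rw [norm_smul, Real.norm_eq_abs, abs_of_nonneg (by linarith : (0:ℝ) ≤ 2 * de)]
  have hq4 : ‖(2 * W) • (xh - yh)‖ ≤ 4 * C + 4 := by
    rw [hnq]; linarith [hWa, hgle1]
  have hgx : 2 * de * ‖xh‖ ≤ 2 * g := by
    rw [hgdef]
    have := mul_nonneg hde.le (norm_nonneg yh)
    linarith [this]
  have hgy : 2 * de * ‖yh‖ ≤ 2 * g := by
    rw [hgdef]
    have := mul_nonneg hde.le (norm_nonneg xh)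
    linarith [this]
  have hp2n : ‖(2 * W) • (xh - yh) + (2 * de) • xh‖ ≤ 4 * C + 6 := by
    refine le_trans (norm_add_le _ _) ?_
    rw [hnx]
    linarith [hq4, hgx, hgle1]
  have hp1n : ‖(2 * W) • (xh - yh) - (2 * de) • yh‖ ≤ 4 * C + 6 := by
    refine le_trans (norm_sub_le _ _) ?_
    rw [hny]
    linarith [hq4, hgy, hgle1]
  have hdiffyx : ‖yh - xh‖ ≤ 1 := by rw [norm_sub_rev]; exact ha1
  have hpp : ((2 * W) • (xh - yh) - (2 * de) • yh) - ((2 * W) • (xh - yh) + (2 * de) • xh)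
      = -((2 * de) • yh + (2 * de) • xh) := by abel
  have hppn : ‖((2 * W) • (xh - yh) - (2 * de) • yh) - ((2 * W) • (xh - yh) + (2 * de) • xh)‖
      ≤ 2 * g := by
    rw [hpp, norm_neg]
    refine le_trans (norm_add_le _ _) ?_
    rw [hnx, hny]
    linarith [hgx, hgy]
  have hHbd := hmod yh xh ((2 * W) • (xh - yh) - (2 * de) • yh)
    ((2 * W) • (xh - yh) + (2 * de) • xh) hp1n hp2n hdiffyx
  have habsH := (abs_le.1 hHbd).2
  have habsH2 := (abs_le.1 hHbd).1
  have hfinal : lam ≤ M * (‖xh - yh‖ + 2 * g) := by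
    have h4 : 0 ≤ 2 * th * t1 := by
      have := mul_nonneg hth.le ht1
      linarith
    have h5 : H (yh, (2 * W) • (xh - yh) - (2 * de) • yh)
        - H (xh, (2 * W) • (xh - yh) + (2 * de) • xh)
        ≤ M * (‖yh - xh‖ + ‖((2 * W) • (xh - yh) - (2 * de) • yh)
          - ((2 * W) • (xh - yh) + (2 * de) • xh)‖) := le_trans (le_abs_self _) hHbd
    have h6 : M * (‖yh - xh‖ + ‖((2 * W) • (xh - yh) - (2 * de) • yh)
        - ((2 * W) • (xh - yh) + (2 * de) • xh)‖) ≤ M * (‖xh - yh‖ + 2 * g) := by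
      apply mul_le_mul_of_nonneg_left _ hM
      rw [norm_sub_rev xh yh] at *
      linarith [hppn]
    linarith [hsub, hsup, h5, h6]
  exact ViscAux.final_lemma lam M ‖xh - yh‖ g W C K de hlam hM hW0 hg0 (norm_nonneg _)
    hK hde hC hfinal hWa hgle1 hgsq hde3 hW3



/-- Uniqueness of Lipschitz viscosity solutions (torus case): for a `C²`,
`ℤⁿ`-periodic, convex and superlinear Hamiltonian `H` and Lipschitz initial datum
`f`, there is at most one Lipschitz viscosity solution of
`∂ₜu + H(x, ∂ₓu) = 0` on `ℝⁿ × (0,∞)` with `u(x,0) = f(x)`. -/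
theorem uniqueness_lipschitz_viscosity_solution {n : ℕ}
    (H : EuclideanSpace ℝ (Fin n) × EuclideanSpace ℝ (Fin n) → ℝ)
    (hC2 : ContDiff ℝ 2 H)
    (hper : ∀ (k : Fin n → ℤ) (x p : EuclideanSpace ℝ (Fin n)),
      H (x + (show EuclideanSpace ℝ (Fin n) from WithLp.toLp 2 (fun i => (k i : ℝ))), p) = H (x, p))
    -- convexity: the Hessian in `p` is positive definite
    (hconv : ∀ x p w : EuclideanSpace ℝ (Fin n), w ≠ 0 →
      0 < fderiv ℝ (fun q => fderiv ℝ (fun q' => H (x, q')) q) p w w)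
    -- superlinearity, uniformly in `x`
    (hsuper : ∀ C : ℝ, ∃ R : ℝ, ∀ x p : EuclideanSpace ℝ (Fin n),
      R ≤ ‖p‖ → C * ‖p‖ ≤ H (x, p))
    (f : EuclideanSpace ℝ (Fin n) → ℝ) (hf : ∃ c, LipschitzWith c f)
    (u v : EuclideanSpace ℝ (Fin n) × ℝ → ℝ)
    (hulip : ∃ c, LipschitzOnWith c u {p | 0 ≤ p.2})
    (hvlip : ∃ c, LipschitzOnWith c v {p | 0 ≤ p.2})
    (husub : IsViscositySubsolutionOn (fun x p => H (x, p)) u {p | 0 < p.2})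
    (husup : IsViscositySupersolutionOn (fun x p => H (x, p)) u {p | 0 < p.2})
    (hvsub : IsViscositySubsolutionOn (fun x p => H (x, p)) v {p | 0 < p.2})
    (hvsup : IsViscositySupersolutionOn (fun x p => H (x, p)) v {p | 0 < p.2})
    (hu0 : ∀ x, u (x, 0) = f x) (hv0 : ∀ x, v (x, 0) = f x) :
    ∀ p : EuclideanSpace ℝ (Fin n) × ℝ, 0 ≤ p.2 → u p = v p := by
  obtain ⟨cu, hcu⟩ := hulip
  obtain ⟨cv, hcv⟩ := hvlip
  have hu' : LipschitzOnWith (cu ⊔ cv) u {p | 0 ≤ p.2} := fun x hx y hy =>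
    (hcu hx hy).trans (mul_le_mul_left (ENNReal.coe_le_coe.2 le_sup_left) _)
  have hv' : LipschitzOnWith (cu ⊔ cv) v {p | 0 ≤ p.2} := fun x hx y hy =>
    (hcv hx hy).trans (mul_le_mul_left (ENNReal.coe_le_coe.2 le_sup_right) _)
  have hmod := fun (Rp : ℝ) (hRp : 0 ≤ Rp) => modulus_of_H H hC2 hper Rp hRp
  have h0 : ∀ x, u (x, 0) = v (x, 0) := fun x => by rw [hu0, hv0]
  have h0' : ∀ x, v (x, 0) = u (x, 0) := fun x => (h0 x).symm
  intro p hp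
  exact le_antisymm
    (comparison_le H hmod u v (cu ⊔ cv) hu' hv' husub hvsup h0 p hp)
    (comparison_le H hmod v u (cu ⊔ cv) hv' hu' hvsub husup h0' p hp)


end
end

section
/- (Equi-Lipschitz property of the rescaled Lax–Oleinik solutions, torus case.) Let L : ℝⁿ × ℝⁿ → ℝ be a Tonelli Lagrangian lifted from the torus, and let K > 0. For each ε > 0 let f_ε : ℝⁿ → ℝ satisfy |f_ε(x) − f_ε(y)| ≤ K·ε·|x − y| for all x,y ∈ ℝⁿ, and define u^ε : ℝⁿ × [0,∞) → ℝ by u^ε(x,0) = f_ε(x) and, for t > 0, u^ε(x,t) = inf { f_ε(γ(0)) + ∫₀ᵗ L(γ(s), ε·γ'(s)) ds : γ ∈ C¹([0,t], ℝⁿ), γ(t) = x }. Then the family (u^ε) is equi-Lipschitz: there exists Q > 0 such that for every ε > 0 and all (x,t), (y,s) ∈ ℝⁿ × [0,∞), |u^ε(x,t) − u^ε(y,s)| ≤ Q·( |t − s| + ε·|x − y| ). -/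
open Set Topology intervalIntegral

noncomputable section

/-- A Tonelli Lagrangian lifted from the torus: `L : ℝⁿ × ℝⁿ → ℝ` is `C²`,
`ℤⁿ`-periodic in `x`, the Hessian `∂²L/∂v∂v` is positive definite everywhere,
and `L` is superlinear in `v`, uniformly in `x`. -/
def IsTonelliPeriodic {n : ℕ}
    (L : EuclideanSpace ℝ (Fin n) × EuclideanSpace ℝ (Fin n) → ℝ) : Prop :=
  ContDiff ℝ 2 L ∧
  (∀ (k : Fin n → ℤ) (x v : EuclideanSpace ℝ (Fin n)),
    L (x + (show EuclideanSpace ℝ (Fin n) from WithLp.toLp 2 fun i => (k i : ℝ)), v) = L (x, v)) ∧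
  (∀ x v w : EuclideanSpace ℝ (Fin n), w ≠ 0 →
    0 < fderiv ℝ (fun q => fderiv ℝ (fun q' => L (x, q')) q) v w w) ∧
  (∀ C : ℝ, ∃ R : ℝ, ∀ x v : EuclideanSpace ℝ (Fin n), R ≤ ‖v‖ → C * ‖v‖ ≤ L (x, v))

namespace LaxAux

variable {n : ℕ}
variable {L : EuclideanSpace ℝ (Fin n) × EuclideanSpace ℝ (Fin n) → ℝ} {K A M ε : ℝ}
    {f : EuclideanSpace ℝ (Fin n) → ℝ}
local notation "E" => EuclideanSpace ℝ (Fin n)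

lemma exists_theta (s m w a₁ : ℝ) (ha₁ : 0 < a₁) (haw : 0 < w - a₁)
    (hm0 : 0 ≤ m) (hmw : m ≤ w - a₁) :
    ∃ θ : ℝ → ℝ, ContDiff ℝ 1 θ ∧ θ 0 = s - m ∧
      (∀ σ : ℝ, w ≤ σ → θ σ = s ∧ deriv θ σ = 0) ∧
      (∀ σ : ℝ, 0 ≤ deriv θ σ ∧ deriv θ σ ≤ 1) := by
  set ρ : ℝ → ℝ := fun u => Real.smoothTransition ((w - u) / a₁) with hρdef
  have hρc : Continuous ρ :=
    Real.smoothTransition.continuous.comp (by fun_prop)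
  have hρ0 : ∀ u, 0 ≤ ρ u := fun u => Real.smoothTransition.nonneg _
  have hρ1 : ∀ u, ρ u ≤ 1 := fun u => Real.smoothTransition.le_one _
  set I : ℝ := ∫ u in (0:ℝ)..w, ρ u with hI
  have h1 : ∫ u in (0:ℝ)..(w-a₁), ρ u = w - a₁ := by
    rw [intervalIntegral.integral_congr (g := fun _ => (1:ℝ)) ?_]
    · simp
    · intro u hu
      rw [uIcc_of_le (by linarith)] at hu
      exact Real.smoothTransition.one_of_one_le ((one_le_div ha₁).2 (by linarith [hu.2]))
  have h2 : 0 ≤ ∫ u in (w-a₁)..w, ρ u :=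
    intervalIntegral.integral_nonneg (by linarith) (fun u _ => hρ0 u)
  have h3 : I = (∫ u in (0:ℝ)..(w-a₁), ρ u) + ∫ u in (w-a₁)..w, ρ u :=
    (intervalIntegral.integral_add_adjacent_intervals (hρc.intervalIntegrable _ _)
      (hρc.intervalIntegrable _ _)).symm
  have hIge : w - a₁ ≤ I := by rw [h3, h1]; linarith
  have hI0 : 0 < I := lt_of_lt_of_le haw hIge
  set b := m / I with hb
  have hb0 : 0 ≤ b := div_nonneg hm0 hI0.le
  have hb1 : b ≤ 1 := (div_le_one hI0).2 (le_trans hmw hIge)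
  set θ : ℝ → ℝ := fun σ => (s - m) + b * ∫ u in (0:ℝ)..σ, ρ u with hθdef
  have hd : ∀ σ, HasDerivAt θ (b * ρ σ) σ := fun σ =>
    ((hρc.integral_hasStrictDerivAt 0 σ).hasDerivAt.const_mul b).const_add (s - m)
  have hder : deriv θ = fun σ => b * ρ σ := funext fun σ => (hd σ).deriv
  refine ⟨θ, ?_, ?_, ?_, ?_⟩
  · exact contDiff_one_iff_deriv.2 ⟨fun σ => (hd σ).differentiableAt,
      by rw [hder]; exact continuous_const.mul hρc⟩
  · simp [hθdef]
  · intro σ hσ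
    have hzero : ∫ u in w..σ, ρ u = 0 := by
      rw [intervalIntegral.integral_congr (g := fun _ => (0:ℝ)) ?_]
      · simp
      · intro u hu
        rw [uIcc_of_le hσ] at hu
        exact Real.smoothTransition.zero_of_nonpos
          (div_nonpos_of_nonpos_of_nonneg (by linarith [hu.1]) ha₁.le)
    constructor
    · have : (∫ u in (0:ℝ)..σ, ρ u) = I := by
        rw [hI, ← intervalIntegral.integral_add_adjacent_intervals
          (hρc.intervalIntegrable 0 w) (hρc.intervalIntegrable w σ), hzero, add_zero]
      rw [hθdef]
      simp only [this, hb]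
      rw [div_mul_cancel₀ _ hI0.ne']
      ring
    · rw [hder]
      have : ρ σ = 0 := Real.smoothTransition.zero_of_nonpos
        (div_nonpos_of_nonpos_of_nonneg (by linarith) ha₁.le)
      simp [this]
  · intro σ
    rw [hder]
    constructor
    · exact mul_nonneg hb0 (hρ0 σ)
    · calc b * ρ σ ≤ b * 1 := by nlinarith [hρ1 σ, hρ0 σ]
        _ ≤ 1 := by linarith

lemma exists_phi (w t : ℝ) (hwt : w < t) :
    ∃ φ : ℝ → ℝ, ContDiff ℝ 1 φ ∧
      (∀ σ : ℝ, σ ≤ w → φ σ = 0 ∧ deriv φ σ = 0) ∧ φ t = 1 ∧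
      (∀ σ : ℝ, 0 ≤ deriv φ σ ∧ deriv φ σ ≤ 3 / (t - w)) := by
  set a : ℝ := (t - w) / 3 with ha
  have ha0 : 0 < a := by rw [ha]; linarith
  set ρ : ℝ → ℝ := fun u =>
    Real.smoothTransition ((u - w) / a) * Real.smoothTransition ((t - u) / a) with hρdef
  have hρc : Continuous ρ :=
    (Real.smoothTransition.continuous.comp (by fun_prop)).mul
      (Real.smoothTransition.continuous.comp (by fun_prop))
  have hρ0 : ∀ u, 0 ≤ ρ u := fun u =>
    mul_nonneg (Real.smoothTransition.nonneg _) (Real.smoothTransition.nonneg _)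
  have hρ1 : ∀ u, ρ u ≤ 1 := fun u =>
    mul_le_one₀ (Real.smoothTransition.le_one _) (Real.smoothTransition.nonneg _)
      (Real.smoothTransition.le_one _)
  have hρleft : ∀ u, u ≤ w → ρ u = 0 := fun u hu => by
    rw [hρdef]
    simp only
    rw [Real.smoothTransition.zero_of_nonpos
      (div_nonpos_of_nonpos_of_nonneg (by linarith) ha0.le), zero_mul]
  set I : ℝ := ∫ u in w..t, ρ u with hI
  have hmid : ∫ u in (w+a)..(t-a), ρ u = a := by
    rw [intervalIntegral.integral_congr (g := fun _ => (1:ℝ)) ?_]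
    · rw [intervalIntegral.integral_const, smul_eq_mul, mul_one]
      rw [ha]; ring
    · intro u hu
      rw [uIcc_of_le (by rw [ha]; linarith)] at hu
      rw [hρdef]
      simp only
      rw [Real.smoothTransition.one_of_one_le ((one_le_div ha0).2 (by linarith [hu.1])),
        Real.smoothTransition.one_of_one_le ((one_le_div ha0).2 (by linarith [hu.2])), mul_one]
  have hsplit : I = (∫ u in w..(w+a), ρ u) + (∫ u in (w+a)..(t-a), ρ u)
      + ∫ u in (t-a)..t, ρ u := by
    rw [intervalIntegral.integral_add_adjacent_intervals (hρc.intervalIntegrable _ _)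
        (hρc.intervalIntegrable _ _),
      intervalIntegral.integral_add_adjacent_intervals (hρc.intervalIntegrable _ _)
        (hρc.intervalIntegrable _ _)]
  have hIge : a ≤ I := by
    have g1 : 0 ≤ ∫ u in w..(w+a), ρ u :=
      intervalIntegral.integral_nonneg (by linarith) (fun u _ => hρ0 u)
    have g2 : 0 ≤ ∫ u in (t-a)..t, ρ u :=
      intervalIntegral.integral_nonneg (by linarith) (fun u _ => hρ0 u)
    rw [hsplit, hmid]; linarith
  have hI0 : 0 < I := lt_of_lt_of_le ha0 hIge
  set φ : ℝ → ℝ := fun σ => (∫ u in w..σ, ρ u) / I with hφdef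
  have hd : ∀ σ, HasDerivAt φ (ρ σ / I) σ := fun σ =>
    (hρc.integral_hasStrictDerivAt w σ).hasDerivAt.div_const I
  have hder : deriv φ = fun σ => ρ σ / I := funext fun σ => (hd σ).deriv
  refine ⟨φ, ?_, ?_, ?_, ?_⟩
  · exact contDiff_one_iff_deriv.2 ⟨fun σ => (hd σ).differentiableAt,
      by rw [hder]; exact hρc.div_const I⟩
  · intro σ hσ
    constructor
    · rw [hφdef]
      simp only
      rw [intervalIntegral.integral_congr (g := fun _ => (0:ℝ)) ?_]
      · simp
      · intro u hu
        rw [uIcc_of_ge hσ] at hu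
        exact hρleft u hu.2
    · rw [hder]
      simp only
      rw [hρleft σ hσ, zero_div]
  · rw [hφdef]
    simp only
    rw [← hI, div_self hI0.ne']
  · intro σ
    rw [hder]
    refine ⟨div_nonneg (hρ0 σ) hI0.le, ?_⟩
    simp only
    calc ρ σ / I ≤ 1 / I := by
          gcongr
          exact hρ1 σ
        _ ≤ 3 / (t - w) := by
          rw [div_le_div_iff₀ hI0 (by linarith : (0:ℝ) < t - w)]
          have : t - w = 3 * a := by rw [ha]; ring
          nlinarith

lemma tonelli_bound (L : E × E → ℝ) (hL : IsTonelliPeriodic L) (r : ℝ) :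
    ∃ M : ℝ, 0 ≤ M ∧ ∀ x v : E, ‖v‖ ≤ r → |L (x, v)| ≤ M := by
  obtain ⟨hC2, hper, -, -⟩ := hL
  set D : Set (EuclideanSpace ℝ (Fin n)) :=
    (⇑(EuclideanSpace.equiv (Fin n) ℝ).symm) '' (Set.univ.pi fun _ => Icc (0:ℝ) 1) with hD
  have hDc : IsCompact D := (isCompact_univ_pi fun _ => isCompact_Icc).image
    (EuclideanSpace.equiv (Fin n) ℝ).symm.continuous
  have hKc : IsCompact (D ×ˢ Metric.closedBall (0:EuclideanSpace ℝ (Fin n)) r) :=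
    hDc.prod (isCompact_closedBall _ _)
  obtain ⟨M, hM⟩ := hKc.exists_bound_of_continuousOn hC2.continuous.continuousOn
  refine ⟨max M 0, le_max_right _ _, fun x v hv => ?_⟩
  set x₀ : EuclideanSpace ℝ (Fin n) := WithLp.toLp 2 (fun i => Int.fract (x i)) with hx₀
  have hxx : L (x, v) = L (x₀, v) := by
    have := hper (fun i => ⌊x i⌋) x₀ v
    have hsum : x₀ + (show EuclideanSpace ℝ (Fin n) from WithLp.toLp 2 fun i => ((⌊x i⌋ : ℤ) : ℝ)) = x := by
      ext i
      rw [PiLp.add_apply]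
      show x₀ i + (⌊x i⌋ : ℝ) = x i
      rw [hx₀]
      exact Int.fract_add_floor (x i)
    rw [hsum] at this
    exact this
  have hmem : x₀ ∈ D := by
    refine ⟨fun i => Int.fract (x i), fun i _ => ?_, rfl⟩
    exact ⟨Int.fract_nonneg _, (Int.fract_lt_one _).le⟩
  have := hM (x₀, v) ⟨hmem, Metric.mem_closedBall.2 (by simpa using hv)⟩
  calc |L (x, v)| = ‖L (x₀, v)‖ := by rw [hxx]; rfl
    _ ≤ M := this
    _ ≤ max M 0 := le_max_left _ _

lemma tonelli_superlinear (L : E × E → ℝ) (hL : IsTonelliPeriodic L) (C : ℝ) (hC : 0 ≤ C) :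
    ∃ A : ℝ, 0 ≤ A ∧ ∀ x v : E, C * ‖v‖ - A ≤ L (x, v) := by
  obtain ⟨R, hR⟩ := hL.2.2.2 C
  obtain ⟨M, hM0, hM⟩ := tonelli_bound L hL (max R 0)
  refine ⟨C * max R 0 + M, by positivity, fun x v => ?_⟩
  by_cases hv : ‖v‖ ≤ max R 0
  · have h1 : |L (x, v)| ≤ M := hM x v hv
    have h2 : C * ‖v‖ ≤ C * max R 0 := by
      apply mul_le_mul_of_nonneg_left hv hC
    have := abs_le.1 h1
    linarith
  · push_neg at hv
    have := hR x v (le_trans (le_max_left _ _) hv.le)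
    have h0 : 0 ≤ C * max R 0 := mul_nonneg hC (le_max_right _ _)
    linarith

lemma tonelli_convex (L : E × E → ℝ) (hL : IsTonelliPeriodic L) (x v : E) {l : ℝ}
    (h0 : 0 ≤ l) (h1 : l ≤ 1) :
    L (x, l • v) ≤ l * L (x, v) + (1 - l) * L (x, 0) := by
  by_cases hv : v = 0
  · subst hv
    rw [smul_zero]
    have : l * L (x, 0) + (1 - l) * L (x, 0) = L (x, 0) := by ring
    linarith
  set h : EuclideanSpace ℝ (Fin n) → ℝ := fun q => L (x, q) with hh
  have hh2 : ContDiff ℝ 2 h := hL.1.comp (contDiff_const.prodMk contDiff_id)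
  have hd1 : Differentiable ℝ h := hh2.differentiable (by norm_num)
  have hsmul : ∀ c : ℝ, HasDerivAt (fun c : ℝ => c • v) v c := fun c => by
    simpa using (hasDerivAt_id c).smul_const v
  set g : ℝ → ℝ := fun c => h (c • v) with hg
  have dg : ∀ c : ℝ, HasDerivAt g (fderiv ℝ h (c • v) v) c := fun c => by
    have := ((hd1 (c • v)).hasFDerivAt.comp_hasDerivAt c (hsmul c)); exact this
  have hdg : deriv g = fun c => fderiv ℝ h (c • v) v := funext fun c => (dg c).deriv
  have hF : ContDiff ℝ 1 (fderiv ℝ h) := (hh2.fderiv_right (m := 1) le_rfl)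
  have ddg : ∀ c : ℝ, HasDerivAt (fun c : ℝ => fderiv ℝ h (c • v) v)
      (fderiv ℝ (fderiv ℝ h) (c • v) v v) c := fun c => by
    have h1 : HasDerivAt (fun c : ℝ => fderiv ℝ h (c • v))
        (fderiv ℝ (fderiv ℝ h) (c • v) v) c :=
      ((hF.differentiable one_ne_zero) (c • v)).hasFDerivAt.comp_hasDerivAt c (hsmul c)
    simpa using h1.clm_apply (hasDerivAt_const c v)
  have hconv : ConvexOn ℝ univ g := by
    apply convexOn_univ_of_deriv2_nonneg
    · exact fun c => (dg c).differentiableAt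
    · rw [hdg]
      exact fun c => (ddg c).differentiableAt
    · intro c
      have : deriv^[2] g c = deriv (deriv g) c := by
        simp [Function.iterate_succ, Function.iterate_one]
      rw [this, hdg]
      have := (ddg c).deriv
      rw [this]
      have hpos := hL.2.2.1 x (c • v) v hv
      exact le_of_lt hpos
  have key := hconv.2 (mem_univ (1:ℝ)) (mem_univ (0:ℝ)) h0 (by linarith : (0:ℝ) ≤ 1 - l)
    (by ring : l + (1 - l) = 1)
  simp only [smul_eq_mul, mul_one, mul_zero, add_zero] at key
  calc L (x, l • v) = g l := rfl
    _ ≤ l * g 1 + (1 - l) * g 0 := key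
    _ = l * L (x, v) + (1 - l) * L (x, 0) := by simp [hg, hh]

def laxSet (L : E × E → ℝ) (f : E → ℝ) (ε : ℝ) (x : E) (t : ℝ) : Set ℝ :=
  {a : ℝ | ∃ γ : ℝ → E, ContDiff ℝ 1 γ ∧
    γ t = x ∧ a = f (γ 0) + ∫ s in (0 : ℝ)..t, L (γ s, ε • deriv γ s)}


lemma action_lower (hLc : Continuous L) (hK : 0 < K) (hε : 0 < ε)
    (hlow : ∀ x v : E, K * ‖v‖ - A ≤ L (x, v))
    (hf : ∀ x y : E, |f x - f y| ≤ K * ε * ‖x - y‖)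
    {γ : ℝ → E} (hγ : ContDiff ℝ 1 γ) {r : ℝ} (hr : 0 ≤ r) :
    f (γ r) - A * r ≤ f (γ 0) + ∫ σ in (0:ℝ)..r, L (γ σ, ε • deriv γ σ) := by
  have hγ' : Continuous (deriv γ) := hγ.continuous_deriv le_rfl
  have hint : Continuous fun σ => L (γ σ, ε • deriv γ σ) :=
    hLc.comp (hγ.continuous.prodMk (hγ'.const_smul ε))
  -- FTC : γ r - γ 0 = ∫ deriv γ
  have hftc : ∫ σ in (0:ℝ)..r, deriv γ σ = γ r - γ 0 :=
    intervalIntegral.integral_deriv_eq_sub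
      (fun σ _ => (hγ.differentiable one_ne_zero).differentiableAt)
      (hγ'.intervalIntegrable _ _)
  have hnorm : ‖γ r - γ 0‖ ≤ ∫ σ in (0:ℝ)..r, ‖deriv γ σ‖ := by
    rw [← hftc]
    exact intervalIntegral.norm_integral_le_integral_norm hr
  have hmono : ∫ σ in (0:ℝ)..r, (K * ε * ‖deriv γ σ‖ - A)
      ≤ ∫ σ in (0:ℝ)..r, L (γ σ, ε • deriv γ σ) := by
    apply intervalIntegral.integral_mono_on hr
      (((continuous_const.mul hγ'.norm).sub continuous_const).intervalIntegrable _ _)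
      (hint.intervalIntegrable _ _)
    intro σ _
    have := hlow (γ σ) (ε • deriv γ σ)
    rw [norm_smul, Real.norm_eq_abs, abs_of_pos hε] at this
    calc K * ε * ‖deriv γ σ‖ - A = K * (ε * ‖deriv γ σ‖) - A := by ring
      _ ≤ L (γ σ, ε • deriv γ σ) := this
  have hcomp : ∫ σ in (0:ℝ)..r, (K * ε * ‖deriv γ σ‖ - A)
      = K * ε * (∫ σ in (0:ℝ)..r, ‖deriv γ σ‖) - A * r := by
    rw [intervalIntegral.integral_sub (f := fun σ => K * ε * ‖deriv γ σ‖) (g := fun _ => A)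
      ((continuous_const.mul hγ'.norm).intervalIntegrable _ _)
      (continuous_const.intervalIntegrable _ _),
      intervalIntegral.integral_const_mul, intervalIntegral.integral_const]
    simp [mul_comm]
  have hfd : f (γ r) - f (γ 0) ≤ K * ε * ‖γ r - γ 0‖ :=
    le_trans (le_abs_self _) (hf (γ r) (γ 0))
  have hKε : 0 ≤ K * ε := by positivity
  nlinarith [mul_le_mul_of_nonneg_left hnorm hKε]

lemma laxSet_nonempty (x : E) (t : ℝ) :
    (f x + (t - 0) • L (x, (0:E))) ∈ laxSet L f ε x t := by
  refine ⟨fun _ => x, contDiff_const, rfl, ?_⟩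
  have : deriv (fun _ : ℝ => x) = fun _ : ℝ => (0:E) := by
    funext σ; exact deriv_const σ x
  rw [this]
  simp only [smul_zero]
  rw [intervalIntegral.integral_const]

lemma laxSet_bddBelow (hLc : Continuous L) (hK : 0 < K) (hε : 0 < ε)
    (hlow : ∀ x v : E, K * ‖v‖ - A ≤ L (x, v))
    (hf : ∀ x y : E, |f x - f y| ≤ K * ε * ‖x - y‖)
    (x : E) {t : ℝ} (ht : 0 ≤ t) :
    ∀ a ∈ laxSet L f ε x t, f x - A * t ≤ a := by
  rintro a ⟨γ, hγ, hγt, rfl⟩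
  have := action_lower hLc hK hε hlow hf hγ ht (r := t)
  rw [hγt] at this
  exact this

lemma core (hLc : Continuous L) (hK : 0 < K) (hε : 0 < ε)
    (hA0 : 0 ≤ A) (hM0 : 0 ≤ M)
    (hlow : ∀ x v : E, K * ‖v‖ - A ≤ L (x, v))
    (hM : ∀ x v : E, ‖v‖ ≤ 3 → |L (x, v)| ≤ M)
    (hconv : ∀ (x v : E) (l : ℝ), 0 ≤ l → l ≤ 1 →
      L (x, l • v) ≤ l * L (x, v) + (1 - l) * L (x, 0))
    (hf : ∀ x y : E, |f x - f y| ≤ K * ε * ‖x - y‖)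
    (x y : E) {t s m w : ℝ} (ht : 0 < t) (hs : 0 < s) (hm0 : 0 ≤ m) (hms : m ≤ s)
    (hw0 : 0 < w) (hwt : w ≤ t)
    (θ φ : ℝ → ℝ) (hθ : ContDiff ℝ 1 θ) (hφ : ContDiff ℝ 1 φ)
    (hθ0 : θ 0 = s - m)
    (hθtail : ∀ σ ∈ Icc w t, θ σ = s ∧ deriv θ σ = 0)
    (hθ' : ∀ σ : ℝ, 0 ≤ deriv θ σ ∧ deriv θ σ ≤ 1)
    (hφ0 : ∀ σ ∈ Icc (0:ℝ) w, φ σ = 0 ∧ deriv φ σ = 0)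
    (hφt : φ t • (x - y) = x - y)
    (hφ' : ∀ σ ∈ Icc w t, ε * ‖deriv φ σ • (x - y)‖ ≤ 3) :
    sInf (laxSet L f ε x t) ≤ sInf (laxSet L f ε y s) + A * (s - m) + M * (t - m) := by
  have hbdd : BddBelow (laxSet L f ε x t) :=
    ⟨f x - A * t, fun a ha => laxSet_bddBelow hLc hK hε hlow hf x ht.le a ha⟩
  have hθc : Continuous (deriv θ) := hθ.continuous_deriv le_rfl
  have hφc : Continuous (deriv φ) := hφ.continuous_deriv le_rfl
  have hkey : ∀ a ∈ laxSet L f ε y s,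
      sInf (laxSet L f ε x t) - (A * (s - m) + M * (t - m)) ≤ a := by
    rintro a ⟨γ, hγ, hγs, rfl⟩
    have hγc : Continuous γ := hγ.continuous
    have hγ' : Continuous (deriv γ) := hγ.continuous_deriv le_rfl
    set Δ : EuclideanSpace ℝ (Fin n) := x - y with hΔ
    set g : ℝ → ℝ := fun r => L (γ r, ε • deriv γ r) with hg
    have hgc : Continuous g := hLc.comp (hγc.prodMk (hγ'.const_smul ε))
    set η : ℝ → EuclideanSpace ℝ (Fin n) := fun σ => γ (θ σ) + φ σ • Δ with hη
    have hd : ∀ σ, HasDerivAt η (deriv θ σ • deriv γ (θ σ) + deriv φ σ • Δ) σ := by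
      intro σ
      have h1 : HasDerivAt (fun σ => γ (θ σ)) (deriv θ σ • deriv γ (θ σ)) σ :=
        HasDerivAt.scomp σ ((hγ.differentiable one_ne_zero) (θ σ)).hasDerivAt
          ((hθ.differentiable one_ne_zero) σ).hasDerivAt
      have h2 : HasDerivAt (fun σ => φ σ • Δ) (deriv φ σ • Δ) σ :=
        (((hφ.differentiable one_ne_zero) σ).hasDerivAt).smul_const Δ
      exact h1.add h2
    have hηd : deriv η = fun σ => deriv θ σ • deriv γ (θ σ) + deriv φ σ • Δ :=
      funext fun σ => (hd σ).deriv
    have hη1 : ContDiff ℝ 1 η := (hγ.comp hθ).add (hφ.smul contDiff_const)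
    have hηc' : Continuous (deriv η) := by
      rw [hηd]
      exact (hθc.smul (hγ'.comp hθ.continuous)).add (hφc.smul continuous_const)
    have hintc : Continuous fun σ => L (η σ, ε • deriv η σ) :=
      hLc.comp (hη1.continuous.prodMk (hηc'.const_smul ε))
    have hwmem : w ∈ Icc w t := ⟨le_rfl, hwt⟩
    have htmem : t ∈ Icc w t := ⟨hwt, le_rfl⟩
    have hηt : η t = x := by
      rw [hη]
      simp only [(hθtail t htmem).1, hγs, hφt, hΔ]
      have h' : φ t • (x - y) = x - y := hφt
      rw [h']
      abel
    have hη0 : η 0 = γ (s - m) := by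
      rw [hη]
      simp only [(hφ0 0 ⟨le_rfl, hw0.le⟩).1, zero_smul, add_zero, hθ0]
    have hmem : (f (η 0) + ∫ σ in (0:ℝ)..t, L (η σ, ε • deriv η σ)) ∈ laxSet L f ε x t :=
      ⟨η, hη1, hηt, rfl⟩
    have hle1 : sInf (laxSet L f ε x t)
        ≤ f (η 0) + ∫ σ in (0:ℝ)..t, L (η σ, ε • deriv η σ) := csInf_le hbdd hmem
    have hsplit : ∫ σ in (0:ℝ)..t, L (η σ, ε • deriv η σ)
        = (∫ σ in (0:ℝ)..w, L (η σ, ε • deriv η σ)) + ∫ σ in w..t, L (η σ, ε • deriv η σ) :=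
      (intervalIntegral.integral_add_adjacent_intervals (hintc.intervalIntegrable _ _)
        (hintc.intervalIntegrable _ _)).symm
    have hp1 : (∫ σ in (0:ℝ)..w, L (η σ, ε • deriv η σ))
        ≤ ∫ σ in (0:ℝ)..w, (deriv θ σ * g (θ σ) + (1 - deriv θ σ) * M) := by
      apply intervalIntegral.integral_mono_on hw0.le (hintc.intervalIntegrable _ _)
        (((hθc.mul (hgc.comp hθ.continuous)).add
          ((continuous_const.sub hθc).mul continuous_const)).intervalIntegrable _ _)
      intro σ hσ
      have hφσ := hφ0 σ hσ
      have hLσ : L (η σ, ε • deriv η σ) = L (γ (θ σ), deriv θ σ • (ε • deriv γ (θ σ))) := by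
        rw [hη, hηd]
        simp only [hφσ.1, hφσ.2, zero_smul, add_zero, smul_comm ε (deriv θ σ)]
      rw [hLσ]
      have hc := hconv (γ (θ σ)) (ε • deriv γ (θ σ)) (deriv θ σ) (hθ' σ).1 (hθ' σ).2
      have hL0 : L (γ (θ σ), 0) ≤ M := le_trans (le_abs_self _) (hM _ 0 (by simp))
      have h1θ : 0 ≤ 1 - deriv θ σ := by linarith [(hθ' σ).2]
      calc L (γ (θ σ), deriv θ σ • (ε • deriv γ (θ σ)))
          ≤ deriv θ σ * L (γ (θ σ), ε • deriv γ (θ σ)) + (1 - deriv θ σ) * L (γ (θ σ), 0) := hc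
        _ ≤ deriv θ σ * g (θ σ) + (1 - deriv θ σ) * M := by
            have := mul_le_mul_of_nonneg_left hL0 h1θ
            rw [hg]
            linarith
    have hcov : ∫ σ in (0:ℝ)..w, deriv θ σ * g (θ σ) = ∫ r in (s-m)..s, g r := by
      have hc := intervalIntegral.integral_comp_smul_deriv (f := θ) (f' := deriv θ) (g := g)
        (a := 0) (b := w) (fun σ _ => ((hθ.differentiable one_ne_zero) σ).hasDerivAt)
        hθc.continuousOn hgc
      rw [hθ0, (hθtail w hwmem).1] at hc
      simpa [smul_eq_mul, Function.comp] using hc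
    have hθint : ∫ σ in (0:ℝ)..w, deriv θ σ = m := by
      rw [intervalIntegral.integral_deriv_eq_sub
        (fun σ _ => (hθ.differentiable one_ne_zero) σ)
        (hθc.intervalIntegrable _ _), (hθtail w hwmem).1, hθ0]
      ring
    have hconst : ∫ σ in (0:ℝ)..w, (1 - deriv θ σ) * M = (w - m) * M := by
      rw [intervalIntegral.integral_mul_const]
      have h1 : ∫ σ in (0:ℝ)..w, (1 - deriv θ σ) = w - m := by
        rw [intervalIntegral.integral_sub intervalIntegrable_const
          (hθc.intervalIntegrable _ _), hθint]
        simp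
      rw [h1]
    have hp2 : (∫ σ in w..t, L (η σ, ε • deriv η σ)) ≤ (t - w) * M := by
      have hb : (∫ σ in w..t, L (η σ, ε • deriv η σ)) ≤ ∫ σ in w..t, M := by
        apply intervalIntegral.integral_mono_on hwt (hintc.intervalIntegrable _ _)
          intervalIntegrable_const
        intro σ hσ
        have h1 := hθtail σ hσ
        have hLσ : L (η σ, ε • deriv η σ) = L (y + φ σ • Δ, ε • (deriv φ σ • Δ)) := by
          rw [hη, hηd]
          simp only [h1.1, h1.2, zero_smul, zero_add, hγs]
        rw [hLσ]
        refine le_trans (le_abs_self _) (hM _ _ ?_)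
        rw [norm_smul, Real.norm_eq_abs, abs_of_pos hε]
        exact hφ' σ hσ
      simpa using hb
    have hdrop : f (γ (s - m)) - A * (s - m) ≤ f (γ 0) + ∫ σ in (0:ℝ)..(s-m), g σ :=
      action_lower hLc hK hε hlow hf hγ (by linarith)
    have hgsplit : (∫ σ in (0:ℝ)..(s-m), g σ) + (∫ σ in (s-m)..s, g σ) = ∫ σ in (0:ℝ)..s, g σ :=
      intervalIntegral.integral_add_adjacent_intervals (hgc.intervalIntegrable _ _)
        (hgc.intervalIntegrable _ _)
    rw [hη0] at hle1
    have e1 : (∫ σ in (0:ℝ)..w, (deriv θ σ * g (θ σ) + (1 - deriv θ σ) * M))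
        = (∫ r in (s-m)..s, g r) + (w - m) * M := by
      have int1 : IntervalIntegrable (fun σ => deriv θ σ * g (θ σ))
          MeasureTheory.volume 0 w :=
        Continuous.intervalIntegrable (hθc.mul (hgc.comp hθ.continuous)) _ _
      have int2 : IntervalIntegrable (fun σ => (1 - deriv θ σ) * M)
          MeasureTheory.volume 0 w :=
        Continuous.intervalIntegrable ((continuous_const.sub hθc).mul continuous_const) _ _
      rw [intervalIntegral.integral_add int1 int2, hcov, hconst]
    have hp1' := hp1.trans_eq e1
    rw [hsplit] at hle1
    linarith
  have hfinal := le_csInf ⟨_, laxSet_nonempty (L := L) (f := f) (ε := ε) y s⟩ hkey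
  linarith

end LaxAux

set_option maxHeartbeats 1000000 in
/-- Equi-Lipschitz property of the rescaled Lax–Oleinik solutions (torus case):
if `L` is a Tonelli Lagrangian lifted from the torus, the initial data `f_ε`
satisfy `|f_ε x − f_ε y| ≤ K·ε·|x − y|`, and `u^ε` is given by the Lax–Oleinik
formula `u^ε(x,t) = inf { f_ε(γ(0)) + ∫₀ᵗ L(γ(s), ε·γ'(s)) ds : γ C¹, γ(t) = x }`
for `t > 0` (with `u^ε(x,0) = f_ε(x)`), then there exists `Q > 0` such that
`|u^ε(x,t) − u^ε(y,s)| ≤ Q·(|t − s| + ε·|x − y|)` for all `ε > 0` and all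
`(x,t), (y,s) ∈ ℝⁿ × [0,∞)`. -/
theorem lax_oleinik_equiLipschitz {n : ℕ}
    (L : EuclideanSpace ℝ (Fin n) × EuclideanSpace ℝ (Fin n) → ℝ)
    (hL : IsTonelliPeriodic L)
    (K : ℝ) (hK : 0 < K)
    (f : ℝ → EuclideanSpace ℝ (Fin n) → ℝ)
    (hf : ∀ ε > (0 : ℝ), ∀ x y : EuclideanSpace ℝ (Fin n),
      |f ε x - f ε y| ≤ K * ε * ‖x - y‖)
    (u : ℝ → EuclideanSpace ℝ (Fin n) → ℝ → ℝ)
    (hu0 : ∀ ε > (0 : ℝ), ∀ x : EuclideanSpace ℝ (Fin n), u ε x 0 = f ε x)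
    (hu : ∀ ε > (0 : ℝ), ∀ x : EuclideanSpace ℝ (Fin n), ∀ t > (0 : ℝ),
      u ε x t = sInf {a : ℝ | ∃ γ : ℝ → EuclideanSpace ℝ (Fin n), ContDiff ℝ 1 γ ∧
        γ t = x ∧ a = f ε (γ 0) + ∫ s in (0 : ℝ)..t, L (γ s, ε • deriv γ s)}) :
    ∃ Q > (0 : ℝ), ∀ ε > (0 : ℝ), ∀ x y : EuclideanSpace ℝ (Fin n), ∀ t s : ℝ,
      0 ≤ t → 0 ≤ s → |u ε x t - u ε y s| ≤ Q * (|t - s| + ε * ‖x - y‖) := by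
  obtain ⟨M, hM0, hM⟩ := LaxAux.tonelli_bound L hL 3
  obtain ⟨A, hA0, hA⟩ := LaxAux.tonelli_superlinear L hL K hK.le
  have hconv : ∀ (x v : EuclideanSpace ℝ (Fin n)) (l : ℝ), 0 ≤ l → l ≤ 1 →
      L (x, l • v) ≤ l * L (x, v) + (1 - l) * L (x, 0) :=
    fun x v l h0 h1 => LaxAux.tonelli_convex L hL x v h0 h1
  have hLc : Continuous L := hL.1.continuous
  set Q : ℝ := 3 * A + 4 * M + K + 1 with hQdef
  have hQ0 : 0 < Q := by positivity
  refine ⟨Q, hQ0, ?_⟩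
  have main : ∀ ε > (0:ℝ), ∀ x y : EuclideanSpace ℝ (Fin n), ∀ t s : ℝ, 0 ≤ t → 0 ≤ s →
      u ε x t - u ε y s ≤ Q * (|t - s| + ε * ‖x - y‖) := by
    intro ε hε x y t s ht hs
    have hfε := hf ε hε
    have hux : ∀ z : EuclideanSpace ℝ (Fin n), ∀ t' : ℝ, 0 < t' →
        u ε z t' = sInf (LaxAux.laxSet L (f ε) ε z t') := fun z t' h => hu ε hε z t' h
    have hupper : ∀ z : EuclideanSpace ℝ (Fin n), ∀ t' : ℝ, 0 < t' →
        u ε z t' ≤ f ε z + M * t' := by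
      intro z t' ht'
      rw [hux z t' ht']
      have h1 := csInf_le ⟨f ε z - A * t',
          fun a ha => LaxAux.laxSet_bddBelow hLc hK hε hA hfε z ht'.le a ha⟩
        (LaxAux.laxSet_nonempty (L := L) (f := f ε) (ε := ε) z t')
      have h2 : L (z, 0) ≤ M := le_trans (le_abs_self _) (hM z 0 (by simp))
      simp only [smul_eq_mul, sub_zero] at h1
      nlinarith
    have hlower : ∀ z : EuclideanSpace ℝ (Fin n), ∀ t' : ℝ, 0 < t' →
        f ε z - A * t' ≤ u ε z t' := by
      intro z t' ht'
      rw [hux z t' ht']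
      exact le_csInf ⟨_, LaxAux.laxSet_nonempty (L := L) (f := f ε) (ε := ε) z t'⟩
        (LaxAux.laxSet_bddBelow hLc hK hε hA hfε z ht'.le)
    have hT0 : 0 ≤ ε * ‖x - y‖ := by positivity
    have hD0 : 0 ≤ |t - s| := abs_nonneg _
    have hst : s - t ≤ |t - s| := by rw [abs_sub_comm]; exact le_abs_self _
    have hts : t - s ≤ |t - s| := le_abs_self _
    have hKf := le_trans (le_abs_self _) (hfε x y)
    have hAD : 0 ≤ A * |t - s| := mul_nonneg hA0 hD0
    have hAT : 0 ≤ A * (ε * ‖x - y‖) := mul_nonneg hA0 hT0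
    have hMD : 0 ≤ M * |t - s| := mul_nonneg hM0 hD0
    have hMT : 0 ≤ M * (ε * ‖x - y‖) := mul_nonneg hM0 hT0
    have hKD : 0 ≤ K * |t - s| := mul_nonneg hK.le hD0
    have hKT : 0 ≤ K * (ε * ‖x - y‖) := mul_nonneg hK.le hT0
    rcases eq_or_lt_of_le ht with ht0 | ht0
    · rcases eq_or_lt_of_le hs with hs0 | hs0
      · rw [← ht0, ← hs0, hu0 ε hε x, hu0 ε hε y]
        have hz : |(0:ℝ) - 0| = 0 := by simp
        rw [hz, hQdef]
        nlinarith [hKf]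
      · rw [← ht0, hu0 ε hε x]
        have h1 := hlower y s hs0
        have h3 : |(0:ℝ) - s| = s := by rw [zero_sub, abs_neg, abs_of_pos hs0]
        rw [h3, hQdef]
        nlinarith [mul_nonneg hA0 hs0.le, mul_nonneg hM0 hs0.le, mul_nonneg hK.le hs0.le,
          mul_nonneg hA0 hT0, mul_nonneg hM0 hT0, mul_nonneg hK.le hT0, mul_nonneg hA0 hs0.le]
    · rcases eq_or_lt_of_le hs with hs0 | hs0
      · rw [← hs0, hu0 ε hε y]
        have h1 := hupper x t ht0
        have h3 : |t - (0:ℝ)| = t := by rw [sub_zero, abs_of_pos ht0]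
        rw [h3, hQdef]
        nlinarith [mul_nonneg hA0 ht0.le, mul_nonneg hM0 ht0.le, mul_nonneg hK.le ht0.le,
          mul_nonneg hA0 hT0, mul_nonneg hM0 hT0, mul_nonneg hK.le hT0]
      · -- both times positive
        by_cases hcase : t ≤ ε * ‖x - y‖
        · have h1 := hupper x t ht0
          have h2 := hlower y s hs0
          have h4 : s ≤ |t - s| + t := by linarith
          rw [hQdef]
          nlinarith [mul_le_mul_of_nonneg_left h4 hA0,
            mul_le_mul_of_nonneg_left hcase hM0,
            mul_le_mul_of_nonneg_left hcase hA0]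
        · push_neg at hcase
          by_cases hxy : x = y
          · subst hxy
            by_cases hts' : t = s
            · subst hts'
              have hz : u ε x t - u ε x t = 0 := sub_self _
              rw [hz]
              positivity
            · set a₁ : ℝ := min |t - s| t / 2 with ha₁def
              have habs : 0 < |t - s| := abs_pos.2 (sub_ne_zero.2 hts')
              have ha₁ : 0 < a₁ := by
                rw [ha₁def]
                have := lt_min habs ht0
                positivity
              have ha₁t : a₁ ≤ t / 2 := by
                rw [ha₁def]
                have h5 : min |t - s| t ≤ t := min_le_right _ _
                linarith
              have ha₁D : a₁ ≤ |t - s| / 2 := by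
                rw [ha₁def]
                have h5 : min |t - s| t ≤ |t - s| := min_le_left _ _
                linarith
              have haw : 0 < t - a₁ := by linarith
              set m : ℝ := min s (t - a₁) with hmdef
              have hm0 : 0 ≤ m := le_min hs haw.le
              have hms : m ≤ s := min_le_left _ _
              obtain ⟨θ, hθ1, hθ2, hθ3, hθ4⟩ :=
                LaxAux.exists_theta s m t a₁ ha₁ haw hm0 (min_le_right _ _)
              have hzc : deriv (fun _ : ℝ => (0:ℝ)) = fun _ => (0:ℝ) :=
                funext fun σ => deriv_const σ 0
              have hxx : x - x = 0 := sub_self x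
              have hcore := LaxAux.core hLc hK hε hA0 hM0 hA hM hconv hfε x x
                ht0 hs0 hm0 hms ht0 le_rfl θ (fun _ => 0) hθ1 contDiff_const hθ2
                (fun σ hσ => hθ3 σ hσ.1) hθ4
                (fun σ _ => ⟨rfl, by rw [hzc]⟩)
                (by rw [hxx, smul_zero])
                (fun σ _ => by rw [hzc, hxx]; simp)
              rw [← hux x t ht0, ← hux x s hs0] at hcore
              have hsm : s - m ≤ 2 * |t - s| := by
                rcases le_total s (t - a₁) with h | h
                · rw [hmdef, min_eq_left h]; linarith
                · rw [hmdef, min_eq_right h]; linarith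
              have htm : t - m ≤ 3 * |t - s| := by linarith
              rw [hQdef]
              nlinarith [mul_le_mul_of_nonneg_left hsm hA0,
                mul_le_mul_of_nonneg_left htm hM0]
          · -- x ≠ y
            have hΔ0 : 0 < ‖x - y‖ := norm_pos_iff.2 (sub_ne_zero.2 hxy)
            have hτ0 : 0 < ε * ‖x - y‖ := by positivity
            set w : ℝ := t - ε * ‖x - y‖ with hwdef
            have hw0 : 0 < w := by rw [hwdef]; linarith
            have hwt : w < t := by rw [hwdef]; linarith
            set a₁ : ℝ := min (ε * ‖x - y‖) w / 2 with ha₁def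
            have ha₁ : 0 < a₁ := by
              rw [ha₁def]
              have := lt_min hτ0 hw0
              positivity
            have ha₁w : a₁ ≤ w / 2 := by
              rw [ha₁def]
              have h5 : min (ε * ‖x - y‖) w ≤ w := min_le_right _ _
              linarith
            have ha₁τ : a₁ ≤ ε * ‖x - y‖ / 2 := by
              rw [ha₁def]
              have h5 : min (ε * ‖x - y‖) w ≤ ε * ‖x - y‖ := min_le_left _ _
              linarith
            have haw : 0 < w - a₁ := by linarith
            set m : ℝ := min s (w - a₁) with hmdef
            have hm0 : 0 ≤ m := le_min hs haw.le
            have hms : m ≤ s := min_le_left _ _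
            obtain ⟨θ, hθ1, hθ2, hθ3, hθ4⟩ :=
              LaxAux.exists_theta s m w a₁ ha₁ haw hm0 (min_le_right _ _)
            obtain ⟨φ, hφ1, hφ2, hφ3, hφ4⟩ := LaxAux.exists_phi w t hwt
            have hφ' : ∀ σ ∈ Icc w t, ε * ‖deriv φ σ • (x - y)‖ ≤ 3 := by
              intro σ _
              rw [norm_smul, Real.norm_eq_abs, abs_of_nonneg (hφ4 σ).1]
              have hb := (hφ4 σ).2
              have htw : t - w = ε * ‖x - y‖ := by rw [hwdef]; ring
              rw [htw] at hb
              calc ε * (deriv φ σ * ‖x - y‖) ≤ ε * (3 / (ε * ‖x - y‖) * ‖x - y‖) := by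
                    apply mul_le_mul_of_nonneg_left _ hε.le
                    exact mul_le_mul_of_nonneg_right hb hΔ0.le
                _ = 3 := by
                    field_simp
            have hcore := LaxAux.core hLc hK hε hA0 hM0 hA hM hconv hfε x y
              ht0 hs0 hm0 hms hw0 hwt.le θ φ hθ1 hφ1 hθ2
              (fun σ hσ => hθ3 σ hσ.1) hθ4
              (fun σ hσ => hφ2 σ hσ.2)
              (by rw [hφ3, one_smul])
              hφ'
            rw [← hux x t ht0, ← hux y s hs0] at hcore
            have hsm : s - m ≤ |t - s| + 2 * (ε * ‖x - y‖) := by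
              rcases le_total s (w - a₁) with h | h
              · rw [hmdef, min_eq_left h]; linarith
              · rw [hmdef, min_eq_right h]
                rw [hwdef]
                linarith
            have htm : t - m ≤ 2 * |t - s| + 2 * (ε * ‖x - y‖) := by linarith
            rw [hQdef]
            nlinarith [mul_le_mul_of_nonneg_left hsm hA0,
              mul_le_mul_of_nonneg_left htm hM0]
  intro ε hε x y t s ht hs
  have h1 := main ε hε x y t s ht hs
  have h2 := main ε hε y x s t hs ht
  rw [abs_sub_comm s t, norm_sub_rev y x] at h2
  rw [abs_sub_le_iff]
  exact ⟨h1, h2⟩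

end
end
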